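/- arXiv:2206.10174 — 5 statements merged into one kernel-verified Lean document; each statement's English description precedes it below -/
import Mathlib

section
/- Fix a coordinate (i,j) and let f ∈ ℝ^K be an arbitrary data vector (playing the role of F̃*_ij). Suppose D ≥ 0 satisfies Σ_{l>k}(Θ⋆_{k;ij} − Θ⋆_{l;ij})² ≤ D², and suppose the regularization parameters satisfy γ < 1/(2K·‖W‖_max) and 6‖f − Θ⋆_ij‖_∞ + 6γK‖W‖_max·D ≤ μ < (3/2)·Θ_min. Then the minimizer θ̂ of θ ↦ ‖θ − f‖₂² + μ‖θ‖₁ + γ‖GAθ‖₂² over ℝ^K is unique, satisfies supp(θ̂) = supp(Θ⋆_ij), and satisfies ‖θ̂ − Θ⋆_ij‖_∞ ≤ 2μ/3. -/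
open scoped Classical
open Matrix

section Aux

lemma pairsum_half {K : ℕ} (g : Fin K → Fin K → ℝ) (hs : ∀ a b, g a b = g b a)
    (hd : ∀ a, g a a = 0) :
    ∑ p : {p : Fin K × Fin K // p.1 < p.2}, g p.val.1 p.val.2
      = (1/2) * ∑ a, ∑ b, g a b := by
  have hsub : ∑ p : {p : Fin K × Fin K // p.1 < p.2}, g p.val.1 p.val.2
      = ∑ p ∈ Finset.univ.filter (fun p : Fin K × Fin K => p.1 < p.2), g p.1 p.2 :=
    (Finset.sum_subtype (p := fun p : Fin K × Fin K => p.1 < p.2)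
      (Finset.univ.filter (fun p : Fin K × Fin K => p.1 < p.2))
      (fun x => by simp) (fun p => g p.1 p.2)).symm
  have htot : ∑ a, ∑ b, g a b = ∑ p : Fin K × Fin K, g p.1 p.2 :=
    (Fintype.sum_prod_type (fun p : Fin K × Fin K => g p.1 p.2)).symm
  have hsplit := Finset.sum_filter_add_sum_filter_not Finset.univ
      (fun p : Fin K × Fin K => p.1 < p.2) (fun p => g p.1 p.2)
  have hsplit2 := Finset.sum_filter_add_sum_filter_not
      (Finset.univ.filter (fun p : Fin K × Fin K => ¬ p.1 < p.2))
      (fun p : Fin K × Fin K => p.2 < p.1) (fun p => g p.1 p.2)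
  have hdiag : ∑ p ∈ (Finset.univ.filter (fun p : Fin K × Fin K => ¬ p.1 < p.2)).filter
      (fun p : Fin K × Fin K => ¬ p.2 < p.1), g p.1 p.2 = 0 := by
    apply Finset.sum_eq_zero
    intro p hp
    simp only [Finset.mem_filter] at hp
    have : p.1 = p.2 := le_antisymm (le_of_not_gt hp.2) (le_of_not_gt hp.1.2)
    rw [this, hd]
  have hgt : ∑ p ∈ (Finset.univ.filter (fun p : Fin K × Fin K => ¬ p.1 < p.2)).filter
      (fun p : Fin K × Fin K => p.2 < p.1), g p.1 p.2
      = ∑ p ∈ Finset.univ.filter (fun p : Fin K × Fin K => p.1 < p.2), g p.1 p.2 := by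
    apply Finset.sum_nbij' (fun p : Fin K × Fin K => (p.2, p.1))
      (fun p : Fin K × Fin K => (p.2, p.1))
    · intro p hp; simp only [Finset.mem_filter] at hp ⊢; exact ⟨Finset.mem_univ _, hp.2⟩
    · intro p hp; simp only [Finset.mem_filter] at hp ⊢
      exact ⟨⟨Finset.mem_univ _, not_lt_of_gt hp.2⟩, hp.2⟩
    · intro p _; rfl
    · intro p _; rfl
    · intro p _; exact hs p.1 p.2
  rw [hsub, htot]
  have hx : ∑ p : Fin K × Fin K, g p.1 p.2
      = ∑ p ∈ Finset.univ.filter (fun p : Fin K × Fin K => p.1 < p.2), g p.1 p.2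
        + ∑ p ∈ Finset.univ.filter (fun p : Fin K × Fin K => ¬ p.1 < p.2), g p.1 p.2 :=
    hsplit.symm
  rw [hx, ← hsplit2, hgt, hdiag]
  ring

lemma sum_comp_update {K : ℕ} (x : Fin K → ℝ) (k : Fin K) (t : ℝ) (h : Fin K → ℝ → ℝ) :
    ∑ j, h j (Function.update x k t j)
      = h k t + ∑ j ∈ Finset.univ.erase k, h j (x j) := by
  rw [← Finset.add_sum_erase Finset.univ (fun j => h j (Function.update x k t j))
      (Finset.mem_univ k)]
  congr 1
  · rw [Function.update_self]
  · exact Finset.sum_congr rfl fun j hj =>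
      by rw [Function.update_of_ne (Finset.mem_erase.mp hj).1]

lemma onedim_zero (c b μ x : ℝ) (hc : 0 ≤ c) (hb : 2 * |b| ≤ μ)
    (hmin : ∀ t : ℝ, (1+c)*x^2 - 2*b*x + μ*|x| ≤ (1+c)*t^2 - 2*b*t + μ*|t|) : x = 0 := by
  have H := hmin 0
  simp only [abs_zero] at H
  have h1 : b * x ≤ |b| * |x| := by rw [← abs_mul]; exact le_abs_self _
  have h2 : x^2 ≤ 0 := by nlinarith [abs_nonneg x, sq_nonneg x, sq_abs x]
  have h3 : x^2 = 0 := le_antisymm h2 (sq_nonneg x)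
  exact pow_eq_zero_iff (n := 2) (by norm_num) |>.mp h3

lemma onedim_grad_one (c b μ x : ℝ) (hc : 0 ≤ c) (hμ : 0 ≤ μ)
    (hmin : ∀ t : ℝ, (1+c)*x^2 - 2*b*x + μ*|x| ≤ (1+c)*t^2 - 2*b*t + μ*|t|) :
    (1+c)*x - b ≤ μ/2 := by
  have hc1 : (0:ℝ) < 1 + c := by linarith
  by_contra hcon
  push_neg at hcon
  obtain ⟨ε, hε0, hε⟩ : ∃ ε : ℝ, 0 < ε ∧ ε = (1+c)*x - b - μ/2 :=
    ⟨(1+c)*x - b - μ/2, by linarith, rfl⟩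
  obtain ⟨δ, hδ0, hδε⟩ : ∃ δ : ℝ, 0 < δ ∧ (1+c)*δ = ε :=
    ⟨ε/(1+c), by positivity, by field_simp⟩
  have H := hmin (x - δ)
  have habs : |x - δ| ≤ |x| + δ := by
    calc |x - δ| = |x + (-δ)| := by ring_nf
      _ ≤ |x| + |(-δ)| := abs_add_le _ _
      _ = |x| + δ := by rw [abs_neg, abs_of_pos hδ0]
  have hμd : μ * |x - δ| ≤ μ * |x| + μ * δ := by nlinarith [mul_le_mul_of_nonneg_left habs hμ]
  have Hcomb : 0 ≤ (1+c)*(-2*x*δ + δ^2) + 2*b*δ + μ*δ := by nlinarith [H, hμd]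
  have h3 : (1+c)*δ*δ = ε*δ := by rw [hδε]
  have h4 : ε*δ = ((1+c)*x - b - μ/2)*δ := by rw [hε]
  nlinarith [Hcomb, h3, h4, mul_pos hε0 hδ0]

lemma onedim_grad (c b μ x : ℝ) (hc : 0 ≤ c) (hμ : 0 ≤ μ)
    (hmin : ∀ t : ℝ, (1+c)*x^2 - 2*b*x + μ*|x| ≤ (1+c)*t^2 - 2*b*t + μ*|t|) :
    |(1+c)*x - b| ≤ μ/2 := by
  rw [abs_le]
  constructor
  · have hmin' : ∀ t : ℝ, (1+c)*(-x)^2 - 2*(-b)*(-x) + μ*|(-x)|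
        ≤ (1+c)*t^2 - 2*(-b)*t + μ*|t| := by
      intro t
      have h := hmin (-t)
      rw [abs_neg] at h
      rw [abs_neg]
      nlinarith [h]
    have := onedim_grad_one c (-b) μ (-x) hc hμ hmin'
    linarith
  · exact onedim_grad_one c b μ x hc hμ hmin

lemma norm_sq_le_sum {K : ℕ} (g : Fin K → ℝ) : ‖g‖^2 ≤ ∑ k, (g k)^2 := by
  have hnn : (0:ℝ) ≤ ∑ k, (g k)^2 := Finset.sum_nonneg fun k _ => sq_nonneg _
  have h1 : ‖g‖ ≤ Real.sqrt (∑ k, (g k)^2) := by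
    rw [pi_norm_le_iff_of_nonneg (Real.sqrt_nonneg _)]
    intro i
    rw [Real.norm_eq_abs, ← Real.sqrt_sq_eq_abs]
    exact Real.sqrt_le_sqrt (Finset.single_le_sum (f := fun k => (g k)^2)
      (fun k _ => sq_nonneg _) (Finset.mem_univ i))
  calc ‖g‖^2 ≤ (Real.sqrt (∑ k, (g k)^2))^2 := by
        apply pow_le_pow_left₀ (norm_nonneg g) h1
    _ = ∑ k, (g k)^2 := Real.sq_sqrt hnn

/-- The objective function. -/
noncomputable def obj {K : ℕ} (W : Fin K → Fin K → ℝ) (μ γ : ℝ) (f θ : Fin K → ℝ) : ℝ :=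
  (∑ k, (θ k - f k) ^ 2) + μ * ∑ k, |θ k| +
    γ * ∑ p : {p : Fin K × Fin K // p.1 < p.2},
      W p.val.1 p.val.2 * (θ p.val.1 - θ p.val.2) ^ 2

variable {K : ℕ} {W : Fin K → Fin K → ℝ} {μ γ : ℝ} {f : Fin K → ℝ}

lemma obj_eq_double (hWsymm : ∀ k l, W k l = W l k) (θ : Fin K → ℝ) :
    obj W μ γ f θ = (∑ k, (θ k - f k)^2) + μ * ∑ k, |θ k|
      + (γ/2) * ∑ a, ∑ b, W a b * (θ a - θ b)^2 := by
  unfold obj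
  have h : ∑ p : {p : Fin K × Fin K // p.1 < p.2},
      W p.val.1 p.val.2 * (θ p.val.1 - θ p.val.2) ^ 2
      = (1/2) * ∑ a, ∑ b, W a b * (θ a - θ b)^2 :=
    pairsum_half (fun a b => W a b * (θ a - θ b)^2)
      (fun a b => by rw [hWsymm a b]; ring) (fun a => by ring)
  rw [h]; ring

lemma double_update (hWsymm : ∀ k l, W k l = W l k) (x : Fin K → ℝ) (k : Fin K) (t : ℝ) :
    ∑ a, ∑ b, W a b * (Function.update x k t a - Function.update x k t b)^2
      = 2 * (∑ l ∈ Finset.univ.erase k, W k l * (t - x l)^2)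
        + ∑ a ∈ Finset.univ.erase k, ∑ b ∈ Finset.univ.erase k, W a b * (x a - x b)^2 := by
  have e1 : ∑ a, ∑ b, W a b * (Function.update x k t a - Function.update x k t b)^2
      = (∑ b, W k b * (t - Function.update x k t b)^2)
        + ∑ a ∈ Finset.univ.erase k, ∑ b, W a b * (x a - Function.update x k t b)^2 :=
    sum_comp_update x k t (fun a v => ∑ b, W a b * (v - Function.update x k t b)^2)
  have h1 : ∑ b, W k b * (t - Function.update x k t b)^2
      = W k k * (t - t)^2 + ∑ b ∈ Finset.univ.erase k, W k b * (t - x b)^2 :=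
    sum_comp_update x k t (fun b v => W k b * (t - v)^2)
  have h2 : ∀ a ∈ Finset.univ.erase k, ∑ b, W a b * (x a - Function.update x k t b)^2
      = W a k * (x a - t)^2 + ∑ b ∈ Finset.univ.erase k, W a b * (x a - x b)^2 := fun a _ =>
    sum_comp_update x k t (fun b v => W a b * (x a - v)^2)
  rw [e1, h1, Finset.sum_congr rfl h2, Finset.sum_add_distrib]
  have h3 : ∑ a ∈ Finset.univ.erase k, W a k * (x a - t)^2
      = ∑ a ∈ Finset.univ.erase k, W k a * (t - x a)^2 :=
    Finset.sum_congr rfl fun a _ => by rw [hWsymm a k]; ring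
  rw [h3]; ring

lemma obj_update (hWsymm : ∀ k l, W k l = W l k) (x : Fin K → ℝ) (k : Fin K) (t : ℝ) :
    obj W μ γ f (Function.update x k t)
      = ((t - f k)^2 + μ * |t| + γ * ∑ l ∈ Finset.univ.erase k, W k l * (t - x l)^2)
        + ((∑ j ∈ Finset.univ.erase k, (x j - f j)^2)
            + μ * (∑ j ∈ Finset.univ.erase k, |x j|)
            + (γ/2) * ∑ a ∈ Finset.univ.erase k, ∑ b ∈ Finset.univ.erase k,
                W a b * (x a - x b)^2) := by
  rw [obj_eq_double hWsymm, double_update hWsymm]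
  have eA : ∑ j, (Function.update x k t j - f j)^2
      = (t - f k)^2 + ∑ j ∈ Finset.univ.erase k, (x j - f j)^2 :=
    sum_comp_update x k t (fun j v => (v - f j)^2)
  have eB : ∑ j, |Function.update x k t j| = |t| + ∑ j ∈ Finset.univ.erase k, |x j| :=
    sum_comp_update x k t (fun j v => |v|)
  rw [eA, eB]; ring

lemma obj_midpoint (hWpos : ∀ k l, 0 ≤ W k l) (hμ0 : 0 ≤ μ) (hγ0 : 0 ≤ γ)
    (u v m : Fin K → ℝ) (hm : ∀ k, 2 * m k = u k + v k) :
    (1/2) * ∑ k, (u k - v k)^2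
      ≤ obj W μ γ f u + obj W μ γ f v - 2 * obj W μ γ f m := by
  unfold obj
  have HA : ∑ k, (2*(m k - f k)^2 + (1/2)*(u k - v k)^2)
      = ∑ k, ((u k - f k)^2 + (v k - f k)^2) :=
    Finset.sum_congr rfl fun k _ => by
      have h := hm k
      linear_combination ((2*m k + u k + v k - 4*f k)/2) * h
  have HA' : 2*(∑ k, (m k - f k)^2) + (1/2)*(∑ k, (u k - v k)^2)
      = (∑ k, (u k - f k)^2) + (∑ k, (v k - f k)^2) := by
    have h1 := HA
    rw [Finset.sum_add_distrib, Finset.sum_add_distrib, ← Finset.mul_sum, ← Finset.mul_sum] at h1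
    exact h1
  have HB : 2*(∑ k, |m k|) ≤ (∑ k, |u k|) + (∑ k, |v k|) := by
    rw [← Finset.sum_add_distrib, Finset.mul_sum]
    apply Finset.sum_le_sum
    intro k _
    have h := hm k
    have h1 : |u k + v k| ≤ |u k| + |v k| := abs_add_le _ _
    have h2 : |2 * m k| = 2 * |m k| := by rw [abs_mul, abs_two]
    rw [h] at h2
    linarith
  have HC : 2*(∑ p : {p : Fin K × Fin K // p.1 < p.2},
        W p.val.1 p.val.2 * (m p.val.1 - m p.val.2)^2)
      ≤ (∑ p : {p : Fin K × Fin K // p.1 < p.2},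
          W p.val.1 p.val.2 * (u p.val.1 - u p.val.2)^2)
        + (∑ p : {p : Fin K × Fin K // p.1 < p.2},
          W p.val.1 p.val.2 * (v p.val.1 - v p.val.2)^2) := by
    rw [← Finset.sum_add_distrib, Finset.mul_sum]
    apply Finset.sum_le_sum
    intro p _
    have ha := hm p.val.1
    have hb := hm p.val.2
    have hmd : m p.val.1 - m p.val.2
        = ((u p.val.1 - u p.val.2) + (v p.val.1 - v p.val.2))/2 := by linarith
    rw [hmd]
    nlinarith [mul_nonneg (hWpos p.val.1 p.val.2)
      (sq_nonneg ((u p.val.1 - u p.val.2) - (v p.val.1 - v p.val.2)))]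
  have HB' := mul_le_mul_of_nonneg_left HB hμ0
  have HC' := mul_le_mul_of_nonneg_left HC hγ0
  nlinarith [HA', HB', HC']

end Aux
set_option maxHeartbeats 2000000 in
/-- deterministic guarantee, smoothly-changing case: if
`γ < 1/(2K‖W‖_max)` and `6‖f − Θ⋆‖_∞ + 6γK‖W‖_max D ≤ μ < (3/2)Θ_min`, then the minimizer
of `θ ↦ ‖θ − f‖₂² + μ‖θ‖₁ + γ‖GAθ‖₂²` is unique, has the same support as `Θ⋆`, and is within
`2μ/3` of `Θ⋆` in the sup-norm. -/
theorem deterministic_guarantee_smooth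
    (K : ℕ) (W : Fin K → Fin K → ℝ)
    (hWsymm : ∀ k l, W k l = W l k) (hWpos : ∀ k l, 0 ≤ W k l)
    (Wmax : ℝ) (hWmax_ub : ∀ k l, |W k l| ≤ Wmax) (hWmax_ex : ∃ k l, |W k l| = Wmax)
    (Θ : Fin K → ℝ) (f : Fin K → ℝ)
    (D : ℝ) (hD0 : 0 ≤ D)
    (hD : ∑ p : {p : Fin K × Fin K // p.1 < p.2},
        (Θ p.val.1 - Θ p.val.2) ^ 2 ≤ D ^ 2)
    (Θmin : ℝ) (hΘmin_pos : 0 < Θmin)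
    (hΘmin : ∀ k, Θ k ≠ 0 → Θmin ≤ |Θ k|)
    (μ γ : ℝ)
    (hγ0 : 0 ≤ γ) (hγ : γ < 1 / (2 * K * Wmax))
    (hμ_lb : ∀ k, 6 * |f k - Θ k| + 6 * γ * K * Wmax * D ≤ μ)
    (hμ_ub : μ < 3 / 2 * Θmin) :
    ∃ θh : Fin K → ℝ,
      (∀ θ : Fin K → ℝ,
        (∑ k, (θh k - f k) ^ 2) + μ * ∑ k, |θh k| +
          γ * ∑ p : {p : Fin K × Fin K // p.1 < p.2},
            W p.val.1 p.val.2 * (θh p.val.1 - θh p.val.2) ^ 2 ≤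
        (∑ k, (θ k - f k) ^ 2) + μ * ∑ k, |θ k| +
          γ * ∑ p : {p : Fin K × Fin K // p.1 < p.2},
            W p.val.1 p.val.2 * (θ p.val.1 - θ p.val.2) ^ 2) ∧
      (∀ θ' : Fin K → ℝ,
        (∀ θ : Fin K → ℝ,
          (∑ k, (θ' k - f k) ^ 2) + μ * ∑ k, |θ' k| +
            γ * ∑ p : {p : Fin K × Fin K // p.1 < p.2},
              W p.val.1 p.val.2 * (θ' p.val.1 - θ' p.val.2) ^ 2 ≤
          (∑ k, (θ k - f k) ^ 2) + μ * ∑ k, |θ k| +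
            γ * ∑ p : {p : Fin K × Fin K // p.1 < p.2},
              W p.val.1 p.val.2 * (θ p.val.1 - θ p.val.2) ^ 2) → θ' = θh) ∧
      (∀ k, θh k ≠ 0 ↔ Θ k ≠ 0) ∧
      (∀ k, |θh k - Θ k| ≤ 2 * μ / 3) := by
  -- Basic positivity facts
  have hWmax0 : 0 ≤ Wmax := by obtain ⟨k, l, h⟩ := hWmax_ex; rw [← h]; exact abs_nonneg _
  have hKW : 0 < 2 * (K : ℝ) * Wmax := by
    rcases eq_or_lt_of_le (mul_nonneg (mul_nonneg (by norm_num : (0:ℝ) ≤ 2)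
        (Nat.cast_nonneg K)) hWmax0) with h | h
    · rw [← h] at hγ; simp at hγ; linarith
    · exact h
  have hKR : 0 < (K : ℝ) := by
    by_contra hcon; push_neg at hcon
    nlinarith
  have hWmaxpos : 0 < Wmax := by
    by_contra hcon; push_neg at hcon
    nlinarith
  have hKnat : 0 < K := by exact_mod_cast hKR
  have hγKW : γ * ((K : ℝ) * Wmax) < 1 / 2 := by
    have h1 := (lt_div_iff₀ hKW).mp hγ
    nlinarith
  have hμ0 : 0 ≤ μ := by
    have h := hμ_lb ⟨0, hKnat⟩
    have h2 : 0 ≤ 6 * γ * (K : ℝ) * Wmax * D :=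
      mul_nonneg (mul_nonneg (mul_nonneg (mul_nonneg (by norm_num) hγ0)
        (Nat.cast_nonneg K)) hWmax0) hD0
    linarith [abs_nonneg (f ⟨0, hKnat⟩ - Θ ⟨0, hKnat⟩)]
  have hμ6 : ∀ k, |f k - Θ k| + γ * (K : ℝ) * Wmax * D ≤ μ / 6 := by
    intro k; have := hμ_lb k; linarith
  -- Cauchy–Schwarz estimate on the variation of Θ
  have hdbl : ∑ a, ∑ b, (Θ a - Θ b)^2 ≤ 2 * D^2 := by
    have hph : (∑ p : {p : Fin K × Fin K // p.1 < p.2}, (Θ p.val.1 - Θ p.val.2) ^ 2)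
        = (1/2) * ∑ a, ∑ b, (Θ a - Θ b)^2 :=
      pairsum_half (fun a b => (Θ a - Θ b)^2) (fun a b => by ring)
        (fun a => by ring)
    linarith [hD, hph.symm.trans_le hD]
  have hrow : ∀ k, ∑ l ∈ Finset.univ.erase k, (Θ l - Θ k)^2 ≤ 2 * D^2 := by
    intro k
    have h1 : ∑ l ∈ Finset.univ.erase k, (Θ l - Θ k)^2 ≤ ∑ l, (Θ l - Θ k)^2 :=
      Finset.sum_le_sum_of_subset_of_nonneg (Finset.erase_subset _ _)
        (fun l _ _ => sq_nonneg _)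
    have h2 : ∑ l, (Θ l - Θ k)^2 = ∑ l, (Θ k - Θ l)^2 :=
      Finset.sum_congr rfl fun l _ => by ring
    have h3 : ∑ l, (Θ k - Θ l)^2 ≤ ∑ a, ∑ b, (Θ a - Θ b)^2 :=
      Finset.single_le_sum (f := fun a => ∑ b, (Θ a - Θ b)^2)
        (fun a _ => Finset.sum_nonneg fun b _ => sq_nonneg _) (Finset.mem_univ k)
    linarith
  have hSk : ∀ k, ∑ l ∈ Finset.univ.erase k, |Θ l - Θ k| ≤ (K : ℝ) * D := by
    intro k
    have hcs : (∑ l ∈ Finset.univ.erase k, |Θ l - Θ k|)^2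
        ≤ ((Finset.univ.erase k).card : ℝ) * ∑ l ∈ Finset.univ.erase k, |Θ l - Θ k|^2 :=
      sq_sum_le_card_mul_sum_sq
    have habs2 : ∑ l ∈ Finset.univ.erase k, |Θ l - Θ k|^2
        = ∑ l ∈ Finset.univ.erase k, (Θ l - Θ k)^2 :=
      Finset.sum_congr rfl fun l _ => sq_abs _
    have hcard : ((Finset.univ.erase k).card : ℝ) = (K : ℝ) - 1 := by
      rw [Finset.card_erase_of_mem (Finset.mem_univ k), Finset.card_univ, Fintype.card_fin]
      rw [Nat.cast_sub hKnat]
      simp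
    have hKe : 2 * ((K : ℝ) - 1) ≤ (K : ℝ)^2 := by nlinarith [sq_nonneg ((K:ℝ) - 1)]
    have hsq : (∑ l ∈ Finset.univ.erase k, |Θ l - Θ k|)^2 ≤ ((K : ℝ) * D)^2 := by
      have hbig : ((K : ℝ) - 1) * (2 * D^2) ≤ ((K : ℝ) * D)^2 := by nlinarith [sq_nonneg D]
      have hrk := hrow k
      have hK1 : (0:ℝ) ≤ (K : ℝ) - 1 := by
        have : (1:ℕ) ≤ K := hKnat
        have : (1:ℝ) ≤ (K:ℝ) := by exact_mod_cast this
        linarith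
      calc (∑ l ∈ Finset.univ.erase k, |Θ l - Θ k|)^2
          ≤ ((K : ℝ) - 1) * ∑ l ∈ Finset.univ.erase k, (Θ l - Θ k)^2 := by
            rw [← habs2]; rw [hcard] at hcs; exact hcs
        _ ≤ ((K : ℝ) - 1) * (2 * D^2) := by
            exact mul_le_mul_of_nonneg_left hrk hK1
        _ ≤ ((K : ℝ) * D)^2 := hbig
    have hS0 : 0 ≤ ∑ l ∈ Finset.univ.erase k, |Θ l - Θ k| :=
      Finset.sum_nonneg fun l _ => abs_nonneg _
    have hKD0 : 0 ≤ (K : ℝ) * D := mul_nonneg (le_of_lt hKR) hD0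
    nlinarith [hsq, hS0, hKD0]
  -- Existence of a global minimizer
  have hcont : Continuous (obj W μ γ f) := by
    unfold obj
    apply Continuous.add
    apply Continuous.add
    · exact continuous_finset_sum _ fun k _ =>
        (((continuous_apply k).sub continuous_const).pow 2)
    · exact continuous_const.mul (continuous_finset_sum _ fun k _ => (continuous_apply k).abs)
    · exact continuous_const.mul (continuous_finset_sum _ fun p _ =>
        continuous_const.mul ((((continuous_apply p.val.1).sub (continuous_apply p.val.2)).pow 2)))
  have hpairnn : ∀ θ : Fin K → ℝ, 0 ≤ ∑ p : {p : Fin K × Fin K // p.1 < p.2},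
      W p.val.1 p.val.2 * (θ p.val.1 - θ p.val.2) ^ 2 := fun θ =>
    Finset.sum_nonneg fun p _ => mul_nonneg (hWpos _ _) (sq_nonneg _)
  have hobjf0 : 0 ≤ obj W μ γ f f := by
    unfold obj
    have h1 : 0 ≤ ∑ k, (f k - f k)^2 := Finset.sum_nonneg fun k _ => sq_nonneg _
    have h2 : 0 ≤ μ * ∑ k, |f k| :=
      mul_nonneg hμ0 (Finset.sum_nonneg fun k _ => abs_nonneg _)
    have h3 := mul_nonneg hγ0 (hpairnn f)
    linarith
  obtain ⟨x, hxmin⟩ : ∃ x : Fin K → ℝ, ∀ θ, obj W μ γ f x ≤ obj W μ γ f θ := by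
    set R := Real.sqrt (obj W μ γ f f) + 1 with hR
    have hR0 : 0 < R := by positivity
    obtain ⟨x, hxmem, hxmin'⟩ := (isCompact_closedBall f R).exists_isMinOn
      ⟨f, Metric.mem_closedBall_self hR0.le⟩ hcont.continuousOn
    rw [isMinOn_iff] at hxmin'
    refine ⟨x, fun θ => ?_⟩
    by_cases hθ : θ ∈ Metric.closedBall f R
    · exact hxmin' θ hθ
    · have h1 : obj W μ γ f x ≤ obj W μ γ f f :=
        hxmin' f (Metric.mem_closedBall_self hR0.le)
      have h2 : R < dist θ f := by rwa [Metric.mem_closedBall, not_le] at hθ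
      have h3 : (dist θ f)^2 ≤ ∑ k, (θ k - f k)^2 := by
        rw [dist_eq_norm]
        have h := norm_sq_le_sum (θ - f)
        simpa using h
      have h4 : R^2 < (dist θ f)^2 := by nlinarith [dist_nonneg (x := θ) (y := f)]
      have h5 : obj W μ γ f f < R^2 := by
        rw [hR]
        nlinarith [Real.sq_sqrt hobjf0, Real.sqrt_nonneg (obj W μ γ f f)]
      have h6 : ∑ k, (θ k - f k)^2 ≤ obj W μ γ f θ := by
        unfold obj
        have hb : 0 ≤ μ * ∑ k, |θ k| :=
          mul_nonneg hμ0 (Finset.sum_nonneg fun k _ => abs_nonneg _)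
        have hcc := mul_nonneg hγ0 (hpairnn θ)
        linarith
      linarith
  -- Coordinate-wise minimality
  have h1d : ∀ (k : Fin K) (t : ℝ),
      ((x k - f k)^2 + μ * |x k| + γ * ∑ l ∈ Finset.univ.erase k, W k l * (x k - x l)^2)
        ≤ ((t - f k)^2 + μ * |t| + γ * ∑ l ∈ Finset.univ.erase k, W k l * (t - x l)^2) := by
    intro k t
    have h := hxmin (Function.update x k t)
    rw [obj_update hWsymm x k t] at h
    have h0 : obj W μ γ f x
        = ((x k - f k)^2 + μ * |x k|
            + γ * ∑ l ∈ Finset.univ.erase k, W k l * (x k - x l)^2)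
          + ((∑ j ∈ Finset.univ.erase k, (x j - f j)^2)
              + μ * (∑ j ∈ Finset.univ.erase k, |x j|)
              + (γ/2) * ∑ a ∈ Finset.univ.erase k, ∑ b ∈ Finset.univ.erase k,
                  W a b * (x a - x b)^2) := by
      conv_lhs => rw [← Function.update_eq_self k x]
      exact obj_update hWsymm x k (x k)
    rw [h0] at h
    linarith
  obtain ⟨c, hc⟩ : ∃ c : Fin K → ℝ,
      ∀ k, c k = γ * ∑ l ∈ Finset.univ.erase k, W k l := ⟨_, fun k => rfl⟩
  obtain ⟨bb, hbb⟩ : ∃ bb : Fin K → ℝ,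
      ∀ k, bb k = f k + γ * ∑ l ∈ Finset.univ.erase k, W k l * x l := ⟨_, fun k => rfl⟩
  have hc0 : ∀ k, 0 ≤ c k := fun k => by
    rw [hc k]; exact mul_nonneg hγ0 (Finset.sum_nonneg fun l _ => hWpos _ _)
  have hmin1 : ∀ (k : Fin K) (t : ℝ),
      (1 + c k)*(x k)^2 - 2*(bb k)*(x k) + μ*|x k|
        ≤ (1 + c k)*t^2 - 2*(bb k)*t + μ*|t| := by
    intro k t
    rw [hc k, hbb k]
    have hs : ∀ s : ℝ, γ * ∑ l ∈ Finset.univ.erase k, W k l * (s - x l)^2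
        = γ * ((∑ l ∈ Finset.univ.erase k, W k l)*s^2
          - 2*(∑ l ∈ Finset.univ.erase k, W k l * x l)*s
          + (∑ l ∈ Finset.univ.erase k, W k l * (x l)^2)) := by
      intro s
      congr 1
      rw [Finset.sum_congr rfl (fun l _ => show W k l * (s - x l)^2
          = W k l * s^2 - 2*(W k l * x l)*s + W k l * (x l)^2 from by ring)]
      rw [Finset.sum_add_distrib, Finset.sum_sub_distrib]
      have e1 : ∑ l ∈ Finset.univ.erase k, W k l * s^2
          = (∑ l ∈ Finset.univ.erase k, W k l) * s^2 := by
        rw [Finset.sum_mul]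
      have e2 : ∑ l ∈ Finset.univ.erase k, 2*(W k l * x l)*s
          = 2*(∑ l ∈ Finset.univ.erase k, W k l * x l)*s := by
        rw [Finset.mul_sum, Finset.sum_mul]
      rw [e1, e2]
    have a1 := h1d k t
    have a2 := hs t
    have a3 := hs (x k)
    nlinarith [a1, a2, a3]
  have hgrad : ∀ k, |(1 + c k) * x k - bb k| ≤ μ/2 := fun k =>
    onedim_grad (c k) (bb k) μ (x k) (hc0 k) hμ0 (hmin1 k)
  -- bound on |bb k - (1+c k) Θ k|
  have hbbΘ : ∀ k, |bb k - (1 + c k) * Θ k|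
      ≤ μ/6 + γ * ∑ l ∈ Finset.univ.erase k, W k l * |x l - Θ l| := by
    intro k
    rw [hc k, hbb k]
    have hid : f k + γ * ∑ l ∈ Finset.univ.erase k, W k l * x l
        - (1 + γ * ∑ l ∈ Finset.univ.erase k, W k l) * Θ k
        = (f k - Θ k) + γ * (∑ l ∈ Finset.univ.erase k, W k l * (x l - Θ l))
          + γ * (∑ l ∈ Finset.univ.erase k, W k l * (Θ l - Θ k)) := by
      have e1 : ∑ l ∈ Finset.univ.erase k, W k l * (x l - Θ l)
            + ∑ l ∈ Finset.univ.erase k, W k l * (Θ l - Θ k)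
          = ∑ l ∈ Finset.univ.erase k, W k l * x l
            - (∑ l ∈ Finset.univ.erase k, W k l) * Θ k := by
        rw [← Finset.sum_add_distrib, Finset.sum_mul, ← Finset.sum_sub_distrib]
        exact Finset.sum_congr rfl fun l _ => by ring
      linear_combination (-γ) * e1
    rw [hid]
    have t1 : |(f k - Θ k) + γ * (∑ l ∈ Finset.univ.erase k, W k l * (x l - Θ l))
        + γ * (∑ l ∈ Finset.univ.erase k, W k l * (Θ l - Θ k))|
        ≤ |f k - Θ k| + |γ * (∑ l ∈ Finset.univ.erase k, W k l * (x l - Θ l))|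
          + |γ * (∑ l ∈ Finset.univ.erase k, W k l * (Θ l - Θ k))| := by
      calc |(f k - Θ k) + γ * (∑ l ∈ Finset.univ.erase k, W k l * (x l - Θ l))
          + γ * (∑ l ∈ Finset.univ.erase k, W k l * (Θ l - Θ k))|
          ≤ |(f k - Θ k) + γ * (∑ l ∈ Finset.univ.erase k, W k l * (x l - Θ l))|
            + |γ * (∑ l ∈ Finset.univ.erase k, W k l * (Θ l - Θ k))| := abs_add_le _ _
        _ ≤ _ := by
            have := abs_add_le (f k - Θ k)
              (γ * (∑ l ∈ Finset.univ.erase k, W k l * (x l - Θ l)))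
            linarith
    have hb1 : |γ * (∑ l ∈ Finset.univ.erase k, W k l * (x l - Θ l))|
        ≤ γ * ∑ l ∈ Finset.univ.erase k, W k l * |x l - Θ l| := by
      rw [abs_mul, abs_of_nonneg hγ0]
      apply mul_le_mul_of_nonneg_left _ hγ0
      calc |∑ l ∈ Finset.univ.erase k, W k l * (x l - Θ l)|
          ≤ ∑ l ∈ Finset.univ.erase k, |W k l * (x l - Θ l)| :=
            Finset.abs_sum_le_sum_abs _ _
        _ = ∑ l ∈ Finset.univ.erase k, W k l * |x l - Θ l| :=
            Finset.sum_congr rfl fun l _ => by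
              rw [abs_mul, abs_of_nonneg (hWpos k l)]
    have hb2 : |γ * (∑ l ∈ Finset.univ.erase k, W k l * (Θ l - Θ k))|
        ≤ γ * ((K : ℝ) * Wmax * D) := by
      rw [abs_mul, abs_of_nonneg hγ0]
      apply mul_le_mul_of_nonneg_left _ hγ0
      calc |∑ l ∈ Finset.univ.erase k, W k l * (Θ l - Θ k)|
          ≤ ∑ l ∈ Finset.univ.erase k, |W k l * (Θ l - Θ k)| :=
            Finset.abs_sum_le_sum_abs _ _
        _ = ∑ l ∈ Finset.univ.erase k, W k l * |Θ l - Θ k| :=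
            Finset.sum_congr rfl fun l _ => by
              rw [abs_mul, abs_of_nonneg (hWpos k l)]
        _ ≤ ∑ l ∈ Finset.univ.erase k, Wmax * |Θ l - Θ k| :=
            Finset.sum_le_sum fun l _ => mul_le_mul_of_nonneg_right
              (le_trans (le_abs_self _) (hWmax_ub k l)) (abs_nonneg _)
        _ = Wmax * ∑ l ∈ Finset.univ.erase k, |Θ l - Θ k| := by rw [Finset.mul_sum]
        _ ≤ Wmax * ((K : ℝ) * D) := mul_le_mul_of_nonneg_left (hSk k) hWmax0
        _ = (K : ℝ) * Wmax * D := by ring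
    have hb0 := hμ6 k
    have : γ * ((K : ℝ) * Wmax * D) = γ * (K : ℝ) * Wmax * D := by ring
    linarith [t1, hb1, hb2]
  -- key coordinatewise inequality
  have hkey : ∀ k, (1 + c k) * |x k - Θ k|
      ≤ 2*μ/3 + γ * ∑ l ∈ Finset.univ.erase k, W k l * |x l - Θ l| := by
    intro k
    have h1 := hgrad k
    have h2 := hbbΘ k
    have h3 : (1 + c k)*|x k - Θ k| = |(1 + c k)*(x k - Θ k)| := by
      rw [abs_mul, abs_of_pos (by linarith [hc0 k] : (0:ℝ) < 1 + c k)]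
    have h4 : |(1 + c k)*(x k - Θ k)|
        ≤ |(1 + c k)*x k - bb k| + |bb k - (1 + c k)*Θ k| := by
      have hdec : (1 + c k)*(x k - Θ k)
          = ((1 + c k)*x k - bb k) + (bb k - (1 + c k)*Θ k) := by ring
      rw [hdec]
      exact abs_add_le _ _
    linarith
  -- the sup-norm bound
  have herr : ∀ k, |x k - Θ k| ≤ 2*μ/3 := by
    obtain ⟨k0, -, hk0⟩ := Finset.exists_max_image Finset.univ
      (fun k => |x k - Θ k|) ⟨⟨0, hKnat⟩, Finset.mem_univ _⟩
    have hsum : γ * ∑ l ∈ Finset.univ.erase k0, W k0 l * |x l - Θ l|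
        ≤ c k0 * |x k0 - Θ k0| := by
      rw [hc k0]
      have h1 : ∑ l ∈ Finset.univ.erase k0, W k0 l * |x l - Θ l|
          ≤ ∑ l ∈ Finset.univ.erase k0, W k0 l * |x k0 - Θ k0| :=
        Finset.sum_le_sum fun l _ =>
          mul_le_mul_of_nonneg_left (hk0 l (Finset.mem_univ l)) (hWpos k0 l)
      have h2 : ∑ l ∈ Finset.univ.erase k0, W k0 l * |x k0 - Θ k0|
          = (∑ l ∈ Finset.univ.erase k0, W k0 l) * |x k0 - Θ k0| := by
        rw [Finset.sum_mul]
      have h3 := mul_le_mul_of_nonneg_left h1 hγ0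
      rw [h2] at h3
      calc γ * ∑ l ∈ Finset.univ.erase k0, W k0 l * |x l - Θ l|
          ≤ γ * ((∑ l ∈ Finset.univ.erase k0, W k0 l) * |x k0 - Θ k0|) := h3
        _ = γ * (∑ l ∈ Finset.univ.erase k0, W k0 l) * |x k0 - Θ k0| := by ring
    have hM : |x k0 - Θ k0| ≤ 2*μ/3 := by
      have := hkey k0
      nlinarith [this, hsum]
    intro k
    exact le_trans (hk0 k (Finset.mem_univ k)) hM
  -- c k ≤ 1/2
  have hhalf : ∀ k, c k ≤ 1/2 := by
    intro k
    rw [hc k]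
    have h1 : ∑ l ∈ Finset.univ.erase k, W k l ≤ (K : ℝ) * Wmax := by
      calc ∑ l ∈ Finset.univ.erase k, W k l
          ≤ ∑ _l ∈ Finset.univ.erase k, Wmax :=
            Finset.sum_le_sum fun l _ => le_trans (le_abs_self _) (hWmax_ub k l)
        _ = ((Finset.univ.erase k).card : ℝ) * Wmax := by
            rw [Finset.sum_const, nsmul_eq_mul]
        _ ≤ (K : ℝ) * Wmax := by
            apply mul_le_mul_of_nonneg_right _ hWmax0
            have hcard : (Finset.univ.erase k).card ≤ K :=
              le_trans (Finset.card_le_card (Finset.erase_subset _ _)) (by simp)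
            exact_mod_cast hcard
    calc γ * ∑ l ∈ Finset.univ.erase k, W k l ≤ γ * ((K : ℝ) * Wmax) :=
          mul_le_mul_of_nonneg_left h1 hγ0
      _ ≤ 1/2 := le_of_lt hγKW
  -- support recovery
  have hzero : ∀ k, Θ k = 0 → x k = 0 := by
    intro k hΘ0
    apply onedim_zero (c k) (bb k) μ (x k) (hc0 k) _ (hmin1 k)
    have h2 := hbbΘ k
    rw [hΘ0, mul_zero, sub_zero] at h2
    have hsum2 : γ * ∑ l ∈ Finset.univ.erase k, W k l * |x l - Θ l|
        ≤ c k * (2*μ/3) := by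
      rw [hc k]
      have h1 : ∑ l ∈ Finset.univ.erase k, W k l * |x l - Θ l|
          ≤ ∑ l ∈ Finset.univ.erase k, W k l * (2*μ/3) :=
        Finset.sum_le_sum fun l _ =>
          mul_le_mul_of_nonneg_left (herr l) (hWpos k l)
      have h2' : ∑ l ∈ Finset.univ.erase k, W k l * (2*μ/3)
          = (∑ l ∈ Finset.univ.erase k, W k l) * (2*μ/3) := by rw [Finset.sum_mul]
      have h3 := mul_le_mul_of_nonneg_left h1 hγ0
      rw [h2'] at h3
      calc γ * ∑ l ∈ Finset.univ.erase k, W k l * |x l - Θ l|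
          ≤ γ * ((∑ l ∈ Finset.univ.erase k, W k l) * (2*μ/3)) := h3
        _ = γ * (∑ l ∈ Finset.univ.erase k, W k l) * (2*μ/3) := by ring
    have h5 := mul_le_mul_of_nonneg_right (hhalf k) (by linarith : (0:ℝ) ≤ 2*μ/3)
    linarith [h2, hsum2, h5]
  have hsupp : ∀ k, x k ≠ 0 ↔ Θ k ≠ 0 := by
    intro k
    constructor
    · intro hx hΘ; exact hx (hzero k hΘ)
    · intro hΘ h0
      have h1 := hΘmin k hΘ
      have h2 := herr k
      have h3 : 2*μ/3 < Θmin := by linarith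
      rw [h0, zero_sub, abs_neg] at h2
      linarith
  -- uniqueness
  have huniq : ∀ θ' : Fin K → ℝ, (∀ θ, obj W μ γ f θ' ≤ obj W μ γ f θ) → θ' = x := by
    intro θ' hθ'
    have hmid := obj_midpoint (f := f) (μ := μ) (γ := γ) hWpos hμ0 hγ0 θ' x
      (fun k => (θ' k + x k)/2) (fun k => by ring)
    have h1 : obj W μ γ f θ' ≤ obj W μ γ f x := hθ' x
    have h2 : obj W μ γ f x ≤ obj W μ γ f (fun k => (θ' k + x k)/2) := hxmin _
    have h4 : ∑ k, (θ' k - x k)^2 ≤ 0 := by nlinarith [hmid, h1, h2]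
    funext k
    have h5 : (θ' k - x k)^2 = 0 :=
      le_antisymm (le_trans (Finset.single_le_sum
        (f := fun j => (θ' j - x j)^2) (fun j _ => sq_nonneg _)
        (Finset.mem_univ k)) h4) (sq_nonneg _)
    have h6 := pow_eq_zero_iff (n := 2) (by norm_num) |>.mp h5
    exact sub_eq_zero.mp h6
  -- final assembly
  refine ⟨x, ?_, ?_, hsupp, ?_⟩
  · exact fun θ => hxmin θ
  · exact fun θ' h => huniq θ' h
  · intro k
    have := herr k
    linarith
end

section
/- Let M = I_K + γAᵀGᵀGA with q = 2, and let C be any matrix with CᵀC = M. If 0 ≤ γ < 1/(2K·‖W‖_max), then for every subset S ⊆ {1,…,K} and every j ∉ S, the mutual incoherency bound ‖(C_Sᵀ C_S)⁻¹ C_Sᵀ C_j‖₁ ≤ 1/2 holds, where C_S denotes the submatrix of columns of C indexed by S and C_j the j-th column of C. -/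
open scoped Classical
open Matrix

/-- The pair-difference matrix `A`: its rows are indexed by pairs `(k,l)` with `k < l`,
with `A_{(k,l),k} = 1`, `A_{(k,l),l} = -1`, and all other entries `0`. -/
noncomputable def pairDiffMatrix (K : ℕ) :
    Matrix {p : Fin K × Fin K // p.1 < p.2} (Fin K) ℝ :=
  Matrix.of fun p m => if m = p.val.1 then 1 else if m = p.val.2 then -1 else 0

/-- The diagonal weight matrix `G` for `q = 2`, with diagonal entries `√(W_{kl})`. -/
noncomputable def weightDiagSqrt (K : ℕ) (W : Fin K → Fin K → ℝ) :
    Matrix {p : Fin K × Fin K // p.1 < p.2} {p : Fin K × Fin K // p.1 < p.2} ℝ :=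
  Matrix.diagonal fun p => Real.sqrt (W p.val.1 p.val.2)

lemma DtD (K : ℕ) (W : Fin K → Fin K → ℝ) (hWpos : ∀ k l, 0 ≤ W k l) :
    (weightDiagSqrt K W)ᵀ * weightDiagSqrt K W =
      Matrix.diagonal (fun p : {p : Fin K × Fin K // p.1 < p.2} => W p.val.1 p.val.2) := by
  rw [weightDiagSqrt, Matrix.diagonal_transpose, Matrix.diagonal_mul_diagonal]
  have : (fun p : {p : Fin K × Fin K // p.1 < p.2} =>
      Real.sqrt (W p.val.1 p.val.2) * Real.sqrt (W p.val.1 p.val.2)) =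
      fun p => W p.val.1 p.val.2 := funext fun p => Real.mul_self_sqrt (hWpos _ _)
  rw [this]

lemma offdiag (K : ℕ) (W : Fin K → Fin K → ℝ)
    (hWsymm : ∀ k l, W k l = W l k) (hWpos : ∀ k l, 0 ≤ W k l)
    (k l : Fin K) (hkl : k ≠ l) :
    ((pairDiffMatrix K)ᵀ * (weightDiagSqrt K W)ᵀ * (weightDiagSqrt K W) *
      (pairDiffMatrix K)) k l = -(W k l) := by
  rw [Matrix.mul_assoc ((pairDiffMatrix K)ᵀ), DtD K W hWpos]
  rw [Matrix.mul_apply]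
  simp only [Matrix.mul_diagonal, Matrix.transpose_apply]
  rcases lt_or_gt_of_ne hkl with h | h
  · rw [Fintype.sum_eq_single (⟨(k, l), h⟩ : {p : Fin K × Fin K // p.1 < p.2})]
    · simp [pairDiffMatrix, hkl, Ne.symm hkl]
    · rintro ⟨⟨a, b⟩, hab⟩ hp
      simp only at hab
      by_cases h1 : k = a
      · by_cases h2 : l = b
        · exfalso; apply hp; subst h1; subst h2; rfl
        · have h3 : ¬ l = a := fun hla => hkl (h1.trans hla.symm)
          simp [pairDiffMatrix, h3, h2]
      · by_cases h2 : k = b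
        · have h3 : ¬ l = a := fun hla => (by subst hla; subst h2; exact lt_asymm h hab)
          have h4 : ¬ l = b := fun hlb => hkl (h2.trans hlb.symm)
          simp [pairDiffMatrix, h1, h2, h3, h4]
        · simp [pairDiffMatrix, h1, h2]
  · rw [Fintype.sum_eq_single (⟨(l, k), h⟩ : {p : Fin K × Fin K // p.1 < p.2})]
    · simp [pairDiffMatrix, hkl, Ne.symm hkl, hWsymm k l]
    · rintro ⟨⟨a, b⟩, hab⟩ hp
      simp only at hab
      by_cases h1 : k = a
      · have h3 : ¬ l = a := fun hla => hkl (h1.trans hla.symm)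
        have h2 : ¬ l = b := fun hlb => (by subst hlb; subst h1; exact lt_asymm h hab)
        simp [pairDiffMatrix, h3, h2]
      · by_cases h2 : k = b
        · by_cases h3 : l = a
          · exfalso; apply hp; subst h2; subst h3; rfl
          · have h4 : ¬ l = b := fun hlb => hkl (h2.trans hlb.symm)
            simp [pairDiffMatrix, h1, h2, h3, h4]
        · simp [pairDiffMatrix, h1, h2]

/-- mutual incoherency, Lemma 3: if `CᵀC = I + γ AᵀGᵀGA` and
`0 ≤ γ < 1/(2K‖W‖_max)`, then for every `S ⊆ {1,…,K}` and `j ∉ S`,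
`‖(C_Sᵀ C_S)⁻¹ C_Sᵀ C_j‖₁ ≤ 1/2`. -/
theorem mutual_incoherency
    (K : ℕ) (W : Fin K → Fin K → ℝ)
    (hWsymm : ∀ k l, W k l = W l k) (hWpos : ∀ k l, 0 ≤ W k l)
    (Wmax : ℝ) (hWmax : ∀ k l, |W k l| ≤ Wmax)
    (γ : ℝ) (hγ0 : 0 ≤ γ) (hγ : γ < 1 / (2 * K * Wmax))
    (m : Type) [Fintype m]
    (C : Matrix m (Fin K) ℝ)
    (hC : Cᵀ * C =
      1 + γ • ((pairDiffMatrix K)ᵀ * (weightDiagSqrt K W)ᵀ * (weightDiagSqrt K W) *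
        (pairDiffMatrix K)))
    (S : Finset (Fin K)) (j : Fin K) (hj : j ∉ S) :
    ∑ s : {x // x ∈ S},
      |(((C.submatrix id (Subtype.val : {x // x ∈ S} → Fin K))ᵀ *
          (C.submatrix id (Subtype.val : {x // x ∈ S} → Fin K)))⁻¹ *ᵥ
        ((C.submatrix id (Subtype.val : {x // x ∈ S} → Fin K))ᵀ *ᵥ
          (fun r => C r j))) s| ≤ 1 / 2 := by
  classical
  set T := C.submatrix id (Subtype.val : {x // x ∈ S} → Fin K) with hT
  set b : {x // x ∈ S} → ℝ := Tᵀ *ᵥ (fun r => C r j) with hb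
  set x : {x // x ∈ S} → ℝ := (Tᵀ * T)⁻¹ *ᵥ b with hx
  -- entries of M := Cᵀ*C off the diagonal
  have hML : ∀ a c : Fin K, a ≠ c → (Cᵀ * C) a c = -(γ * W a c) := by
    intro a c hac
    rw [hC]
    simp only [Matrix.add_apply, Matrix.smul_apply, Matrix.one_apply_ne hac,
      offdiag K W hWsymm hWpos a c hac, smul_eq_mul]
    ring
  have hMS : ∀ a c : {x // x ∈ S}, (Tᵀ * T) a c = (Cᵀ * C) a.val c.val := by
    intro a c
    simp [Matrix.mul_apply, hT, Matrix.submatrix_apply]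
  have hbval : ∀ a : {x // x ∈ S}, b a = -(γ * W a.val j) := by
    intro a
    have hanej : (a : Fin K) ≠ j := fun he => hj (he ▸ a.property)
    have h1 : b a = (Cᵀ * C) a.val j := by
      simp [hb, Matrix.mulVec, Matrix.mul_apply, hT, dotProduct]
    rw [h1, hML _ _ hanej]
  -- quadratic form lower bound
  have hquad : ∀ v : {x // x ∈ S} → ℝ, v ⬝ᵥ v ≤ v ⬝ᵥ ((Tᵀ * T) *ᵥ v) := by
    intro v
    set e : Fin K → ℝ := fun k => if h : k ∈ S then v ⟨k, h⟩ else 0 with he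
    have he0 : ∀ k ∉ S, e k = 0 := fun k hk => dif_neg hk
    have hev : ∀ a : {x // x ∈ S}, e a.val = v a := fun a => dif_pos a.2
    have hsum : ∀ g : Fin K → ℝ,
        (∑ k, e k * g k) = ∑ a : {x // x ∈ S}, v a * g a.val := by
      intro g
      have h1 : (∑ k, e k * g k) = ∑ k ∈ S, e k * g k :=
        (Finset.sum_subset (Finset.subset_univ S)
          (fun k _ hk => by rw [he0 k hk, zero_mul])).symm
      rw [h1, Finset.sum_subtype S (fun _ => Iff.rfl) (fun k => e k * g k)]
      exact Finset.sum_congr rfl (fun a _ => by rw [hev a])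
    have inner : ∀ k : Fin K,
        (∑ l, (Cᵀ * C) k l * e l) = ∑ c : {x // x ∈ S}, (Cᵀ * C) k c.val * v c := by
      intro k
      calc ∑ l, (Cᵀ * C) k l * e l = ∑ l, e l * (Cᵀ * C) k l := by
            exact Finset.sum_congr rfl fun l _ => mul_comm _ _
        _ = ∑ c : {x // x ∈ S}, v c * (Cᵀ * C) k c.val := hsum _
        _ = ∑ c : {x // x ∈ S}, (Cᵀ * C) k c.val * v c :=
            Finset.sum_congr rfl fun c _ => mul_comm _ _
    have key : v ⬝ᵥ ((Tᵀ * T) *ᵥ v) = e ⬝ᵥ ((Cᵀ * C) *ᵥ e) := by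
      calc v ⬝ᵥ ((Tᵀ * T) *ᵥ v)
          = ∑ a : {x // x ∈ S}, v a * ∑ c : {x // x ∈ S}, (Cᵀ * C) a.val c.val * v c := by
            simp only [dotProduct, Matrix.mulVec, hMS]
        _ = ∑ k, e k * ∑ l, (Cᵀ * C) k l * e l := by
            rw [hsum (fun k => ∑ l, (Cᵀ * C) k l * e l)]
            exact Finset.sum_congr rfl fun a _ => by rw [inner a.val]
        _ = e ⬝ᵥ ((Cᵀ * C) *ᵥ e) := by simp only [dotProduct, Matrix.mulVec]
    have hvv : v ⬝ᵥ v = e ⬝ᵥ e := by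
      simp only [dotProduct]
      rw [hsum e]
      exact (Finset.sum_congr rfl fun a _ => by rw [hev a]).symm
    have hpsd : 0 ≤ e ⬝ᵥ (((pairDiffMatrix K)ᵀ * (weightDiagSqrt K W)ᵀ *
        (weightDiagSqrt K W) * (pairDiffMatrix K)) *ᵥ e) := by
      have h1 := (Matrix.posSemidef_conjTranspose_mul_self
        ((weightDiagSqrt K W) * (pairDiffMatrix K))).dotProduct_mulVec_nonneg e
      have h2 : ((weightDiagSqrt K W) * (pairDiffMatrix K))ᴴ *
          ((weightDiagSqrt K W) * (pairDiffMatrix K)) =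
          (pairDiffMatrix K)ᵀ * (weightDiagSqrt K W)ᵀ * (weightDiagSqrt K W) *
            (pairDiffMatrix K) := by
        rw [Matrix.conjTranspose_mul]
        have e1 : (pairDiffMatrix K)ᴴ = (pairDiffMatrix K)ᵀ := by
          ext i j'; simp [Matrix.conjTranspose_apply]
        have e2 : (weightDiagSqrt K W)ᴴ = (weightDiagSqrt K W)ᵀ := by
          ext i j'; simp [Matrix.conjTranspose_apply]
        rw [e1, e2, Matrix.mul_assoc ((pairDiffMatrix K)ᵀ), Matrix.mul_assoc,
          Matrix.mul_assoc]
      rw [h2] at h1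
      simpa using h1
    calc v ⬝ᵥ v = e ⬝ᵥ e := hvv
      _ ≤ e ⬝ᵥ e + γ * (e ⬝ᵥ (((pairDiffMatrix K)ᵀ * (weightDiagSqrt K W)ᵀ *
            (weightDiagSqrt K W) * (pairDiffMatrix K)) *ᵥ e)) :=
          le_add_of_nonneg_right (mul_nonneg hγ0 hpsd)
      _ = e ⬝ᵥ ((Cᵀ * C) *ᵥ e) := by
          rw [hC]
          simp [Matrix.add_mulVec, Matrix.one_mulVec, Matrix.smul_mulVec,
            dotProduct_add, dotProduct_smul, smul_eq_mul]
      _ = v ⬝ᵥ ((Tᵀ * T) *ᵥ v) := key.symm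
  -- positive definiteness and inverse
  have hherm : (Tᵀ * T).IsHermitian := by
    have h0 := Matrix.isHermitian_conjTranspose_mul_self T
    have hTc : Tᴴ = Tᵀ := by ext i j'; simp [Matrix.conjTranspose_apply]
    rwa [hTc] at h0
  have hpd : (Tᵀ * T).PosDef := by
    refine Matrix.PosDef.of_dotProduct_mulVec_pos hherm fun v hv => ?_
    have h1 : 0 < v ⬝ᵥ v := by
      obtain ⟨a, ha⟩ := Function.ne_iff.mp hv
      exact Finset.sum_pos' (fun i _ => mul_self_nonneg (v i))
        ⟨a, Finset.mem_univ a, mul_self_pos.mpr ha⟩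
    have h2 := lt_of_lt_of_le h1 (hquad v)
    simpa using h2
  have hdet : IsUnit (Tᵀ * T).det := isUnit_iff_ne_zero.mpr (ne_of_gt hpd.det_pos)
  have hMx : (Tᵀ * T) *ᵥ x = b := by
    rw [hx, Matrix.mulVec_mulVec, Matrix.mul_nonsing_inv _ hdet, Matrix.one_mulVec]
  -- numeric facts
  have hK : 0 < (K : ℝ) := by exact_mod_cast j.pos
  have hW0 : 0 ≤ Wmax := le_trans (abs_nonneg _) (hWmax j j)
  have hWpos' : 0 < Wmax := by
    rcases hW0.lt_or_eq with h | h
    · exact h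
    · exfalso; rw [← h] at hγ; simp at hγ; linarith
  have hKW : γ * ((K : ℝ) * Wmax) < 1 / 2 := by
    have hpos : 0 < 2 * (K : ℝ) * Wmax := by positivity
    have h2 : γ * (2 * (K : ℝ) * Wmax) < 1 := by
      calc γ * (2 * (K : ℝ) * Wmax) < (1 / (2 * (K : ℝ) * Wmax)) * (2 * (K : ℝ) * Wmax) :=
            mul_lt_mul_of_pos_right hγ hpos
        _ = 1 := by field_simp
    nlinarith
  have hbabs : ∀ a : {x // x ∈ S}, |b a| ≤ γ * Wmax := by
    intro a
    rw [hbval a, abs_neg, abs_mul, abs_of_nonneg hγ0]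
    exact mul_le_mul_of_nonneg_left (hWmax _ _) hγ0
  -- ‖x‖₂ ≤ ‖b‖₂
  have hxx0 : 0 ≤ x ⬝ᵥ x := Finset.sum_nonneg fun i _ => mul_self_nonneg _
  have hbb0 : 0 ≤ b ⬝ᵥ b := Finset.sum_nonneg fun i _ => mul_self_nonneg _
  have hxx_le : x ⬝ᵥ x ≤ b ⬝ᵥ b := by
    have h1 : x ⬝ᵥ x ≤ x ⬝ᵥ b := by have h := hquad x; rwa [hMx] at h
    have hcs : (x ⬝ᵥ b) ^ 2 ≤ (x ⬝ᵥ x) * (b ⬝ᵥ b) := by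
      have h := Finset.sum_mul_sq_le_sq_mul_sq Finset.univ x b
      simpa [dotProduct, sq] using h
    rcases hxx0.lt_or_eq with h0 | h0
    · nlinarith
    · linarith
  -- assemble
  set n := (S.card : ℝ) with hn
  have hn0 : 0 ≤ n := by positivity
  have hbb : b ⬝ᵥ b ≤ n * (γ * Wmax) ^ 2 := by
    have h1 : b ⬝ᵥ b ≤ ∑ _a : {x // x ∈ S}, (γ * Wmax) ^ 2 :=
      Finset.sum_le_sum fun a _ => by
        have h := hbabs a
        nlinarith [abs_nonneg (b a), sq_abs (b a)]
    calc b ⬝ᵥ b ≤ ∑ _a : {x // x ∈ S}, (γ * Wmax) ^ 2 := h1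
      _ = (Fintype.card {x // x ∈ S} : ℝ) * (γ * Wmax) ^ 2 := by
          rw [Finset.sum_const, Finset.card_univ]; simp [nsmul_eq_mul]
      _ = n * (γ * Wmax) ^ 2 := by rw [Fintype.card_coe]
  have hcs2 : (∑ a : {x // x ∈ S}, |x a|) ^ 2 ≤ n * (x ⬝ᵥ x) := by
    have h := Finset.sum_mul_sq_le_sq_mul_sq Finset.univ
      (fun _ : {x // x ∈ S} => (1 : ℝ)) (fun a => |x a|)
    have h2 : ∀ a : {x // x ∈ S}, |x a| ^ 2 = x a * x a := fun a => by
      rw [sq_abs]; ring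
    calc (∑ a : {x // x ∈ S}, |x a|) ^ 2
        = (∑ a : {x // x ∈ S}, 1 * |x a|) ^ 2 := by simp
      _ ≤ (∑ _a : {x // x ∈ S}, (1:ℝ) ^ 2) * ∑ a : {x // x ∈ S}, |x a| ^ 2 := h
      _ = n * (x ⬝ᵥ x) := by
          rw [Finset.sum_const, Finset.card_univ]
          simp only [one_pow, nsmul_eq_mul, mul_one]
          rw [Fintype.card_coe]
          congr 1
          exact Finset.sum_congr rfl fun a _ => h2 a
  have hnK : n ≤ (K : ℝ) := by
    rw [hn]
    exact_mod_cast le_trans (Finset.card_le_univ S) (le_of_eq (Fintype.card_fin K))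
  have hP0 : 0 ≤ ∑ a : {x // x ∈ S}, |x a| := Finset.sum_nonneg fun a _ => abs_nonneg _
  have hfinal : (∑ a : {x // x ∈ S}, |x a|) ^ 2 ≤ (n * (γ * Wmax)) ^ 2 := by
    calc (∑ a : {x // x ∈ S}, |x a|) ^ 2 ≤ n * (x ⬝ᵥ x) := hcs2
      _ ≤ n * (b ⬝ᵥ b) := mul_le_mul_of_nonneg_left hxx_le hn0
      _ ≤ n * (n * (γ * Wmax) ^ 2) := mul_le_mul_of_nonneg_left hbb hn0
      _ = (n * (γ * Wmax)) ^ 2 := by ring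
  have hQ : n * (γ * Wmax) < 1 / 2 := by
    have h1 : n * (γ * Wmax) ≤ (K : ℝ) * (γ * Wmax) :=
      mul_le_mul_of_nonneg_right hnK (mul_nonneg hγ0 hW0)
    have h2 : (K : ℝ) * (γ * Wmax) = γ * ((K : ℝ) * Wmax) := by ring
    linarith
  have hQ0 : 0 ≤ n * (γ * Wmax) := by positivity
  have hPle : (∑ a : {x // x ∈ S}, |x a|) ≤ n * (γ * Wmax) :=
    le_of_pow_le_pow_left₀ two_ne_zero hQ0 hfinal
  linarith
end

section
/- Suppose all weights are equal to 1 (W_{kl} = 1 for all l > k) and γ, μ > 0. Fix (i,j) and a vector Θ⋆_ij ∈ ℝ^K with at least one nonzero entry, and let F be the adjugate matrix of B_{S_B:}ᵀ B_{S_B:} ∈ ℝ^{K×K}. Then for every pair of indices u ≠ v with Θ⋆_{u;ij} = Θ⋆_{v;ij}: (i) F_{uu} = F_{vv}; and (ii) F_{uk} = F_{vk} for every index k with k ≠ u and k ≠ v. -/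
open scoped Classical
open Matrix

/-- The Moore–Penrose pseudoinverse of a real matrix, characterized by the four Penrose
conditions (which determine it uniquely; it always exists for real matrices). -/
noncomputable def moorePenrose {m n : Type*} [Fintype m] [Fintype n]
    (B : Matrix m n ℝ) : Matrix n m ℝ :=
  if h : ∃ X : Matrix n m ℝ,
      B * X * B = B ∧ X * B * X = X ∧ (B * X)ᵀ = B * X ∧ (X * B)ᵀ = X * B then
    h.choose
  else 0

/-- The matrix `B = [(γ/μ)GA ; I_K]` for `q = 1`. -/
noncomputable def Bmat (K : ℕ) (W : Fin K → Fin K → ℝ) (γ μ : ℝ) :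
    Matrix ({p : Fin K × Fin K // p.1 < p.2} ⊕ Fin K) (Fin K) ℝ :=
  Matrix.of fun r c =>
    match r with
    | Sum.inl p => γ / μ * (W p.val.1 p.val.2 *
        (if c = p.val.1 then 1 else if c = p.val.2 then -1 else 0))
    | Sum.inr k => if c = k then 1 else 0

/-- The support `S_B` of `BΘ⋆`. -/
noncomputable def suppB (K : ℕ) (W : Fin K → Fin K → ℝ) (γ μ : ℝ) (Θ : Fin K → ℝ) :
    Finset ({p : Fin K × Fin K // p.1 < p.2} ⊕ Fin K) :=
  Finset.univ.filter fun r => ((Bmat K W γ μ) *ᵥ Θ) r ≠ 0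

/-- The submatrix `B_{S_B:}` of rows of `B` indexed by `S_B`. -/
noncomputable def BmatS (K : ℕ) (W : Fin K → Fin K → ℝ) (γ μ : ℝ) (Θ : Fin K → ℝ) :
    Matrix {x // x ∈ suppB K W γ μ Θ} (Fin K) ℝ :=
  (Bmat K W γ μ).submatrix Subtype.val id

/-- The sign vector `sign((BΘ⋆)_{S_B})`. -/
noncomputable def signBS (K : ℕ) (W : Fin K → Fin K → ℝ) (γ μ : ℝ) (Θ : Fin K → ℝ) :
    {x // x ∈ suppB K W γ μ Θ} → ℝ :=
  fun r => Real.sign (((Bmat K W γ μ) *ᵥ Θ) r.val)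

noncomputable def pairSwap (K : ℕ) (u v : Fin K) :
    {p : Fin K × Fin K // p.1 < p.2} → {p : Fin K × Fin K // p.1 < p.2} :=
  fun p =>
    if h : Equiv.swap u v p.val.1 < Equiv.swap u v p.val.2 then
      ⟨(Equiv.swap u v p.val.1, Equiv.swap u v p.val.2), h⟩
    else
      ⟨(Equiv.swap u v p.val.2, Equiv.swap u v p.val.1), by
        have hne : Equiv.swap u v p.val.1 ≠ Equiv.swap u v p.val.2 :=
          fun hh => absurd (Equiv.injective _ hh) (ne_of_lt p.prop)
        exact lt_of_le_of_ne (not_lt.mp h) (Ne.symm hne)⟩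

lemma pairSwap_invol (K : ℕ) (u v : Fin K) :
    Function.Involutive (pairSwap K u v) := by
  rintro ⟨⟨a, b⟩, hab⟩
  by_cases h1 : Equiv.swap u v a < Equiv.swap u v b
  · have e1 : pairSwap K u v ⟨(a, b), hab⟩ = ⟨(Equiv.swap u v a, Equiv.swap u v b), h1⟩ := by
      simp only [pairSwap]
      rw [dif_pos h1]
    rw [e1]
    simp only [pairSwap, Equiv.swap_apply_self]
    rw [dif_pos hab]
  · have hne : Equiv.swap u v a ≠ Equiv.swap u v b :=
      fun hh => absurd (Equiv.injective _ hh) (ne_of_lt hab)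
    have h2 : Equiv.swap u v b < Equiv.swap u v a :=
      lt_of_le_of_ne (not_lt.mp h1) (Ne.symm hne)
    have e1 : pairSwap K u v ⟨(a, b), hab⟩ = ⟨(Equiv.swap u v b, Equiv.swap u v a), h2⟩ := by
      simp only [pairSwap]
      rw [dif_neg h1]
    rw [e1]
    simp only [pairSwap, Equiv.swap_apply_self]
    rw [dif_neg (not_lt.mpr hab.le)]

noncomputable def rowPerm (K : ℕ) (u v : Fin K) :
    Equiv.Perm ({p : Fin K × Fin K // p.1 < p.2} ⊕ Fin K) :=
  Equiv.sumCongr (Function.Involutive.toPerm _ (pairSwap_invol K u v)) (Equiv.swap u v)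

noncomputable def rowSign (K : ℕ) (u v : Fin K) :
    ({p : Fin K × Fin K // p.1 < p.2} ⊕ Fin K) → ℝ :=
  fun r => match r with
  | Sum.inl p => if Equiv.swap u v p.val.1 < Equiv.swap u v p.val.2 then 1 else -1
  | Sum.inr _ => 1

lemma rowSign_mul_self (K : ℕ) (u v : Fin K)
    (r : {p : Fin K × Fin K // p.1 < p.2} ⊕ Fin K) :
    rowSign K u v r * rowSign K u v r = 1 := by
  cases r with
  | inl p => simp only [rowSign]; split_ifs <;> norm_num
  | inr k => simp [rowSign]

lemma rowSign_ne_zero (K : ℕ) (u v : Fin K)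
    (r : {p : Fin K × Fin K // p.1 < p.2} ⊕ Fin K) :
    rowSign K u v r ≠ 0 := by
  cases r with
  | inl p => simp only [rowSign]; split_ifs <;> norm_num
  | inr k => simp [rowSign]

lemma Bmat_rowPerm (K : ℕ) (W : Fin K → Fin K → ℝ)
    (hWone : ∀ k l : Fin K, k < l → W k l = 1) (γ μ : ℝ) (u v : Fin K)
    (r : {p : Fin K × Fin K // p.1 < p.2} ⊕ Fin K) (c : Fin K) :
    Bmat K W γ μ (rowPerm K u v r) (Equiv.swap u v c)
      = rowSign K u v r * Bmat K W γ μ r c := by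
  cases r with
  | inr k =>
      simp [Bmat, rowPerm, rowSign, Equiv.apply_eq_iff_eq]
  | inl p =>
      obtain ⟨⟨a, b⟩, hab⟩ := p
      simp only [rowPerm, Equiv.sumCongr_apply, Sum.map_inl,
        Function.Involutive.coe_toPerm, rowSign]
      simp only [pairSwap]
      split_ifs with h1
      · simp only [Bmat, Matrix.of_apply, one_mul]
        rw [hWone _ _ h1, hWone _ _ hab]
        simp [Equiv.apply_eq_iff_eq]
      · have hne : Equiv.swap u v a ≠ Equiv.swap u v b :=
          fun hh => absurd (Equiv.injective _ hh) (ne_of_lt hab)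
        have h2 : Equiv.swap u v b < Equiv.swap u v a :=
          lt_of_le_of_ne (not_lt.mp h1) (Ne.symm hne)
        simp only [Bmat, Matrix.of_apply]
        rw [hWone _ _ h2, hWone _ _ hab]
        have hne' : a ≠ b := ne_of_lt hab
        rcases eq_or_ne c a with rfl | hca
        · simp [Equiv.apply_eq_iff_eq, hne', Ne.symm hne']
          all_goals ring
        · rcases eq_or_ne c b with rfl | hcb
          · simp [Equiv.apply_eq_iff_eq, hne', Ne.symm hne']
            all_goals ring
          · simp [Equiv.apply_eq_iff_eq, hca, hcb]

lemma mulVec_rowPerm (K : ℕ) (W : Fin K → Fin K → ℝ)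
    (hWone : ∀ k l : Fin K, k < l → W k l = 1) (γ μ : ℝ) (u v : Fin K)
    (Θ : Fin K → ℝ) (hΘs : ∀ c, Θ (Equiv.swap u v c) = Θ c)
    (r : {p : Fin K × Fin K // p.1 < p.2} ⊕ Fin K) :
    (Bmat K W γ μ *ᵥ Θ) (rowPerm K u v r)
      = rowSign K u v r * (Bmat K W γ μ *ᵥ Θ) r := by
  simp only [Matrix.mulVec, dotProduct]
  rw [← Equiv.sum_comp (Equiv.swap u v)
    (fun c => Bmat K W γ μ (rowPerm K u v r) c * Θ c)]
  rw [Finset.mul_sum]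
  refine Finset.sum_congr rfl fun c _ => ?_
  rw [Bmat_rowPerm K W hWone γ μ u v r c, hΘs c]
  ring

/-- Lemma 4: with all weights equal to 1 and `γ, μ > 0`, let `F` be the
adjugate of `B_{S_B:}ᵀB_{S_B:}`. Then for every `u ≠ v` with `Θ⋆_u = Θ⋆_v`:
(i) `F_uu = F_vv`; (ii) `F_uk = F_vk` for every `k ∉ {u, v}`. -/
theorem adjugate_symmetries
    (K : ℕ) (W : Fin K → Fin K → ℝ)
    (hWone : ∀ k l : Fin K, k < l → W k l = 1)
    (μ γ : ℝ) (hμ : 0 < μ) (hγ : 0 < γ)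
    (Θ : Fin K → ℝ) (hΘ : ∃ k, Θ k ≠ 0) :
    ∀ u v : Fin K, u ≠ v → Θ u = Θ v →
      (Matrix.adjugate ((BmatS K W γ μ Θ)ᵀ * BmatS K W γ μ Θ)) u u =
        (Matrix.adjugate ((BmatS K W γ μ Θ)ᵀ * BmatS K W γ μ Θ)) v v ∧
      ∀ k : Fin K, k ≠ u → k ≠ v →
        (Matrix.adjugate ((BmatS K W γ μ Θ)ᵀ * BmatS K W γ μ Θ)) u k =
          (Matrix.adjugate ((BmatS K W γ μ Θ)ᵀ * BmatS K W γ μ Θ)) v k := by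
  intro u v huv hΘuv
  have hΘs : ∀ c, Θ (Equiv.swap u v c) = Θ c := by
    intro c
    rcases eq_or_ne c u with rfl | hcu
    · simp [Equiv.swap_apply_left, hΘuv.symm]
    rcases eq_or_ne c v with rfl | hcv
    · simp [Equiv.swap_apply_right, hΘuv]
    · simp [Equiv.swap_apply_of_ne_of_ne hcu hcv]
  have hsupp : ∀ r, r ∈ suppB K W γ μ Θ ↔ rowPerm K u v r ∈ suppB K W γ μ Θ := by
    intro r
    simp only [suppB, Finset.mem_filter, Finset.mem_univ, true_and]
    rw [mulVec_rowPerm K W hWone γ μ u v Θ hΘs r]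
    constructor
    · intro h hc
      exact h ((mul_eq_zero.mp hc).resolve_left (rowSign_ne_zero K u v r))
    · intro h hc
      exact h (by rw [hc, mul_zero])
  set M := (BmatS K W γ μ Θ)ᵀ * BmatS K W γ μ Θ with hMdef
  have hMswap : ∀ a b : Fin K, M a b = M (Equiv.swap u v a) (Equiv.swap u v b) := by
    intro a b
    simp only [hMdef, Matrix.mul_apply, Matrix.transpose_apply]
    refine Fintype.sum_equiv (Equiv.subtypeEquiv (rowPerm K u v) hsupp) _ _ ?_
    intro r
    simp only [BmatS, Matrix.submatrix_apply, id_eq, Equiv.subtypeEquiv_apply]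
    rw [Bmat_rowPerm K W hWone γ μ u v r.val a, Bmat_rowPerm K W hWone γ μ u v r.val b]
    rw [mul_mul_mul_comm, rowSign_mul_self, one_mul]
  have hsub : M.submatrix (Equiv.swap u v) (Equiv.swap u v) = M := by
    ext a b
    exact (hMswap a b).symm
  have hadj := Matrix.adjugate_submatrix_equiv_self (Equiv.swap u v) M
  rw [hsub] at hadj
  have key : ∀ a b : Fin K,
      Matrix.adjugate M a b = Matrix.adjugate M (Equiv.swap u v a) (Equiv.swap u v b) := by
    intro a b
    have h2 : Matrix.adjugate M a b
        = ((Matrix.adjugate M).submatrix (Equiv.swap u v) (Equiv.swap u v)) a b := by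
      rw [← hadj]
    simpa [Matrix.submatrix_apply] using h2
  refine ⟨?_, ?_⟩
  · have h := key u u
    simpa [Equiv.swap_apply_left] using h
  · intro k hku hkv
    have h := key u k
    rwa [Equiv.swap_apply_left, Equiv.swap_apply_of_ne_of_ne hku hkv] at h
end

section
/- Suppose all weights are equal to 1 (W_{kl} = 1 for all l > k) and γ, μ > 0. Fix (i,j) and a vector Θ⋆_ij ∈ ℝ^K with at least one nonzero entry. Then for every row index r of B of the form r = π(k,l) with l > k and Θ⋆_{k;ij} = Θ⋆_{l;ij} (so r ∈ S_B^c corresponds to a zero difference), we have B_{r:} B_{S_B:}^† sign((BΘ⋆_ij)_{S_B}) = 0, where B_{r:} is the r-th row of B and † denotes the Moore–Penrose pseudoinverse. -/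
open scoped Classical
open Matrix

/-! ### Auxiliary lemmas -/

section Aux

/-- A symmetric real matrix whose square is zero is zero. -/
lemma symm_sq_zero {n : Type*} [Fintype n] (S : Matrix n n ℝ)
    (hs : Sᵀ = S) (h2 : S * S = 0) : S = 0 := by
  have hsym : ∀ a b, S b a = S a b := fun a b => by
    have := congrFun (congrFun hs b) a
    rw [Matrix.transpose_apply] at this
    exact this.symm
  ext i j
  have h0 : ∑ k, S i k * S i k = 0 := by
    have hz : (S * S) i i = 0 := by rw [h2]; rfl
    rw [Matrix.mul_apply] at hz
    rw [← hz]
    exact Finset.sum_congr rfl fun k _ => by rw [hsym i k]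
  have := (Finset.sum_eq_zero_iff_of_nonneg
    (fun k _ => mul_self_nonneg (S i k))).mp h0 j (Finset.mem_univ j)
  simpa using mul_self_eq_zero.mp this

/-- Uniqueness of the Moore–Penrose pseudoinverse. -/
lemma mp_unique {m n : Type*} [Fintype m] [Fintype n]
    (B : Matrix m n ℝ) (X Y : Matrix n m ℝ)
    (hX1 : B * X * B = B) (hX2 : X * B * X = X)
    (hX3 : (B * X)ᵀ = B * X) (hX4 : (X * B)ᵀ = X * B)
    (hY1 : B * Y * B = B) (hY2 : Y * B * Y = Y)
    (hY3 : (B * Y)ᵀ = B * Y) (hY4 : (Y * B)ᵀ = Y * B) : X = Y := by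
  have hMXe : B * X = B * Y := by
    have := symm_sq_zero (B * X - B * Y)
      (by rw [Matrix.transpose_sub, hX3, hY3])
      (by
        simp only [Matrix.sub_mul, Matrix.mul_sub, ← Matrix.mul_assoc]
        rw [hX1, hY1]
        abel)
    exact sub_eq_zero.mp this
  have hXBY : X * B * Y = X := by
    rw [Matrix.mul_assoc, ← hMXe, ← Matrix.mul_assoc, hX2]
  have hYBX : Y * B * X = Y := by
    rw [Matrix.mul_assoc, hMXe, ← Matrix.mul_assoc, hY2]
  have hTe : X * B = Y * B := by
    have := symm_sq_zero (X * B - Y * B)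
      (by rw [Matrix.transpose_sub, hX4, hY4])
      (by
        simp only [Matrix.sub_mul, Matrix.mul_sub, ← Matrix.mul_assoc]
        rw [hX2, hY2, hXBY, hYBX]
        abel)
    exact sub_eq_zero.mp this
  calc X = X * B * Y := hXBY.symm
  _ = Y * B * Y := by rw [hTe]
  _ = Y := hY2

variable (K : ℕ) (W : Fin K → Fin K → ℝ) (γ μ : ℝ) (Θ : Fin K → ℝ)

lemma BmulVec_inr (v : Fin K → ℝ) (k : Fin K) :
    (Bmat K W γ μ *ᵥ v) (Sum.inr k) = v k := by
  simp [Bmat, Matrix.mulVec, dotProduct, ite_mul]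

lemma BmulVec_inl (v : Fin K → ℝ) (p : {p : Fin K × Fin K // p.1 < p.2}) :
    (Bmat K W γ μ *ᵥ v) (Sum.inl p) =
      γ / μ * W p.val.1 p.val.2 * (v p.val.1 - v p.val.2) := by
  have hne : p.val.1 ≠ p.val.2 := ne_of_lt p.2
  simp only [Bmat, Matrix.mulVec, dotProduct, Matrix.of_apply]
  rw [Finset.sum_congr rfl (g := fun c => γ/μ * W p.val.1 p.val.2 *
      ((if c = p.val.1 then v c else 0) - (if c = p.val.2 then v c else 0)))
    (fun c _ => by by_cases h1 : c = p.val.1 <;> by_cases h2 : c = p.val.2 <;>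
      simp [h1, h2, hne, Ne.symm hne] <;> ring)]
  rw [← Finset.mul_sum, Finset.sum_sub_distrib, Finset.sum_ite_eq' Finset.univ,
    Finset.sum_ite_eq' Finset.univ]
  simp

lemma Bmat_inl_apply (p : {p : Fin K × Fin K // p.1 < p.2}) (c : Fin K) :
    Bmat K W γ μ (Sum.inl p) c = γ / μ * (W p.val.1 p.val.2 *
      (if c = p.val.1 then 1 else if c = p.val.2 then -1 else 0)) := rfl

lemma Bmat_inr_apply (k c : Fin K) :
    Bmat K W γ μ (Sum.inr k) c = if c = k then 1 else 0 := rfl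

/-- The rows in the support make `B` injective (full column rank of `B_{S_B:}`). -/
lemma BmatS_mulVec_injective
    (hWone : ∀ k l : Fin K, k < l → W k l = 1)
    (hμ : 0 < μ) (hγ : 0 < γ) (hΘ : ∃ k, Θ k ≠ 0)
    (x : Fin K → ℝ) (hx : BmatS K W γ μ Θ *ᵥ x = 0) : x = 0 := by
  have hc : γ / μ ≠ 0 := ne_of_gt (div_pos hγ hμ)
  have hB : ∀ r, (Bmat K W γ μ *ᵥ Θ) r ≠ 0 → (Bmat K W γ μ *ᵥ x) r = 0 := by
    intro r hr
    have hmem : r ∈ suppB K W γ μ Θ := by simp [suppB, hr]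
    exact congrFun hx ⟨r, hmem⟩
  obtain ⟨k0, hk0⟩ := hΘ
  have hx0 : ∀ a, Θ a ≠ 0 → x a = 0 := by
    intro a ha
    have := hB (Sum.inr a) (by rwa [BmulVec_inr])
    rwa [BmulVec_inr] at this
  have hxk0 : x k0 = 0 := hx0 k0 hk0
  funext a
  by_cases ha : Θ a = 0
  · have hak : a ≠ k0 := fun h => hk0 (h ▸ ha)
    have key : ∀ (p : {p : Fin K × Fin K // p.1 < p.2}),
        Θ p.val.1 ≠ Θ p.val.2 → x p.val.1 = x p.val.2 := by
      intro p hp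
      have hBv : (Bmat K W γ μ *ᵥ Θ) (Sum.inl p) ≠ 0 := by
        rw [BmulVec_inl, hWone _ _ p.2]
        simp only [mul_one]
        exact mul_ne_zero hc (sub_ne_zero.mpr hp)
      have := hB (Sum.inl p) hBv
      rw [BmulVec_inl, hWone _ _ p.2] at this
      simp only [mul_one] at this
      rcases mul_eq_zero.mp this with h | h
      · exact absurd h hc
      · exact sub_eq_zero.mp h
    rcases lt_or_gt_of_ne hak with h | h
    · have := key ⟨(a, k0), h⟩ (by simpa [ha] using (Ne.symm hk0))
      simpa [hxk0] using this
    · have := key ⟨(k0, a), h⟩ (by simpa [ha] using hk0)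
      simp only [Pi.zero_apply]
      rw [← this, hxk0]
  · exact hx0 a ha

/-- The Gram matrix of `B_{S_B:}` entrywise as a sum over all rows of `B`. -/
lemma gram_entry (a b : Fin K) :
    ((BmatS K W γ μ Θ)ᵀ * BmatS K W γ μ Θ) a b =
      ∑ r, if (Bmat K W γ μ *ᵥ Θ) r ≠ 0
        then Bmat K W γ μ r a * Bmat K W γ μ r b else 0 := by
  rw [Matrix.mul_apply]
  have h1 : ∀ x : {x // x ∈ suppB K W γ μ Θ},
      (BmatS K W γ μ Θ)ᵀ a x * BmatS K W γ μ Θ x b =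
        Bmat K W γ μ x.val a * Bmat K W γ μ x.val b := fun x => rfl
  rw [Finset.sum_congr rfl (fun x _ => h1 x),
    ← Finset.sum_subtype (suppB K W γ μ Θ) (fun x => Iff.rfl)
      (fun r => Bmat K W γ μ r a * Bmat K W γ μ r b),
    suppB, Finset.sum_filter]

/-- The vector `c = B_{S_B:}ᵀ sign((BΘ)_{S_B})` entrywise as a sum over all rows. -/
lemma cvec_entry (a : Fin K) :
    ((BmatS K W γ μ Θ)ᵀ *ᵥ signBS K W γ μ Θ) a =
      ∑ r, Bmat K W γ μ r a * Real.sign ((Bmat K W γ μ *ᵥ Θ) r) := by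
  rw [Matrix.mulVec, dotProduct]
  have h1 : ∀ x : {x // x ∈ suppB K W γ μ Θ},
      (BmatS K W γ μ Θ)ᵀ a x * signBS K W γ μ Θ x =
        Bmat K W γ μ x.val a * Real.sign ((Bmat K W γ μ *ᵥ Θ) x.val) := fun x => rfl
  rw [Finset.sum_congr rfl (fun x _ => h1 x),
    ← Finset.sum_subtype (suppB K W γ μ Θ) (fun x => Iff.rfl)
      (fun r => Bmat K W γ μ r a * Real.sign ((Bmat K W γ μ *ᵥ Θ) r)),
    suppB, Finset.sum_filter]
  refine Finset.sum_congr rfl fun r _ => ?_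
  by_cases hr : (Bmat K W γ μ *ᵥ Θ) r ≠ 0
  · rw [if_pos hr]
  · rw [if_neg hr, not_not.mp hr, Real.sign_zero, mul_zero]

end Aux

section Sym

variable {K : ℕ} (σ : Equiv.Perm (Fin K))

/-- The induced map on ordered pairs. -/
noncomputable def pairMap (p : {p : Fin K × Fin K // p.1 < p.2}) :
    {p : Fin K × Fin K // p.1 < p.2} :=
  if h : σ p.val.1 < σ p.val.2 then ⟨(σ p.val.1, σ p.val.2), h⟩
  else ⟨(σ p.val.2, σ p.val.1),
    lt_of_le_of_ne (not_lt.mp h) (fun he => (ne_of_lt p.2) (σ.injective he.symm))⟩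

lemma pairMap_involutive (hinv : ∀ a, σ (σ a) = a) :
    Function.Involutive (pairMap σ) := by
  intro p
  by_cases h : σ p.val.1 < σ p.val.2
  · have e1 : pairMap σ p = ⟨(σ p.val.1, σ p.val.2), h⟩ := by
      rw [pairMap, dif_pos h]
    rw [e1, pairMap]
    simp only [hinv]
    rw [dif_pos p.2]
  · have hle : σ p.val.2 < σ p.val.1 :=
      lt_of_le_of_ne (not_lt.mp h) (fun he => (ne_of_lt p.2) (σ.injective he.symm))
    have e1 : pairMap σ p = ⟨(σ p.val.2, σ p.val.1), hle⟩ := by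
      rw [pairMap, dif_neg h]
    rw [e1, pairMap]
    simp only [hinv]
    rw [dif_neg (not_lt.mpr (le_of_lt p.2))]

lemma pairMap_bijective (hinv : ∀ a, σ (σ a) = a) :
    Function.Bijective (pairMap σ) :=
  (pairMap_involutive σ hinv).bijective

variable (W : Fin K → Fin K → ℝ) (γ μ : ℝ) (Θ : Fin K → ℝ)

/-- Sign of the pair under the permutation. -/
noncomputable def pairSign (p : {p : Fin K × Fin K // p.1 < p.2}) : ℝ :=
  if σ p.val.1 < σ p.val.2 then 1 else -1

lemma pairSign_sq (p : {p : Fin K × Fin K // p.1 < p.2}) :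
    pairSign σ p * pairSign σ p = 1 := by
  rw [pairSign]; split <;> norm_num

lemma pairSign_ne (p : {p : Fin K × Fin K // p.1 < p.2}) : pairSign σ p ≠ 0 := by
  rw [pairSign]; split <;> norm_num

lemma row_rel (hWone : ∀ k l : Fin K, k < l → W k l = 1)
    (p : {p : Fin K × Fin K // p.1 < p.2}) (a : Fin K) :
    Bmat K W γ μ (Sum.inl (pairMap σ p)) (σ a) =
      pairSign σ p * Bmat K W γ μ (Sum.inl p) a := by
  have hne : p.val.1 ≠ p.val.2 := ne_of_lt p.2
  by_cases h : σ p.val.1 < σ p.val.2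
  · have e1 : pairMap σ p = ⟨(σ p.val.1, σ p.val.2), h⟩ := by
      rw [pairMap, dif_pos h]
    rw [e1, pairSign, if_pos h, Bmat_inl_apply, Bmat_inl_apply]
    simp only [hWone _ _ p.2, hWone _ _ h]
    simp only [σ.injective.eq_iff]
    ring
  · have hle : σ p.val.2 < σ p.val.1 :=
      lt_of_le_of_ne (not_lt.mp h) (fun he => (ne_of_lt p.2) (σ.injective he.symm))
    have e1 : pairMap σ p = ⟨(σ p.val.2, σ p.val.1), hle⟩ := by
      rw [pairMap, dif_neg h]
    rw [e1, pairSign, if_neg h, Bmat_inl_apply, Bmat_inl_apply]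
    simp only [hWone _ _ p.2, hWone _ _ hle]
    simp only [σ.injective.eq_iff]
    by_cases h1 : a = p.val.1 <;> by_cases h2' : a = p.val.2 <;>
      simp [h1, h2', hne, Ne.symm hne] <;> ring

lemma val_rel (hWone : ∀ k l : Fin K, k < l → W k l = 1)
    (hσΘ : ∀ a, Θ (σ a) = Θ a) (p : {p : Fin K × Fin K // p.1 < p.2}) :
    (Bmat K W γ μ *ᵥ Θ) (Sum.inl (pairMap σ p)) =
      pairSign σ p * (Bmat K W γ μ *ᵥ Θ) (Sum.inl p) := by
  by_cases h : σ p.val.1 < σ p.val.2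
  · have e1 : pairMap σ p = ⟨(σ p.val.1, σ p.val.2), h⟩ := by
      rw [pairMap, dif_pos h]
    rw [e1, pairSign, if_pos h, BmulVec_inl, BmulVec_inl]
    simp only [hWone _ _ p.2, hWone _ _ h, hσΘ]
    ring
  · have hle : σ p.val.2 < σ p.val.1 :=
      lt_of_le_of_ne (not_lt.mp h) (fun he => (ne_of_lt p.2) (σ.injective he.symm))
    have e1 : pairMap σ p = ⟨(σ p.val.2, σ p.val.1), hle⟩ := by
      rw [pairMap, dif_neg h]
    rw [e1, pairSign, if_neg h, BmulVec_inl, BmulVec_inl]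
    simp only [hWone _ _ p.2, hWone _ _ hle, hσΘ]
    ring

lemma gram_invariant (hWone : ∀ k l : Fin K, k < l → W k l = 1)
    (hinv : ∀ a, σ (σ a) = a) (hσΘ : ∀ a, Θ (σ a) = Θ a) (a b : Fin K) :
    ((BmatS K W γ μ Θ)ᵀ * BmatS K W γ μ Θ) (σ a) (σ b) =
      ((BmatS K W γ μ Θ)ᵀ * BmatS K W γ μ Θ) a b := by
  rw [gram_entry, gram_entry]
  rw [Fintype.sum_sum_type, Fintype.sum_sum_type]
  congr 1
  · -- inl part: reindex by pairMap
    rw [← Function.Bijective.sum_comp (pairMap_bijective σ hinv)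
      (fun p => if (Bmat K W γ μ *ᵥ Θ) (Sum.inl p) ≠ 0
        then Bmat K W γ μ (Sum.inl p) (σ a) * Bmat K W γ μ (Sum.inl p) (σ b) else 0)]
    refine Finset.sum_congr rfl fun p _ => ?_
    simp only [val_rel σ W γ μ Θ hWone hσΘ, row_rel σ W γ μ hWone]
    have hs := pairSign_ne σ p
    have hsq := pairSign_sq σ p
    by_cases hv : (Bmat K W γ μ *ᵥ Θ) (Sum.inl p) ≠ 0
    · rw [if_pos (mul_ne_zero hs hv), if_pos hv]
      calc pairSign σ p * Bmat K W γ μ (Sum.inl p) a *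
            (pairSign σ p * Bmat K W γ μ (Sum.inl p) b)
          = (pairSign σ p * pairSign σ p) *
            (Bmat K W γ μ (Sum.inl p) a * Bmat K W γ μ (Sum.inl p) b) := by ring
        _ = _ := by rw [hsq, one_mul]
    · rw [not_not] at hv
      rw [hv, mul_zero, if_neg (by simp), if_neg (by simp)]
  · -- inr part: reindex by σ
    rw [← Equiv.sum_comp σ (fun k => if (Bmat K W γ μ *ᵥ Θ) (Sum.inr k) ≠ 0
      then Bmat K W γ μ (Sum.inr k) (σ a) * Bmat K W γ μ (Sum.inr k) (σ b) else 0)]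
    refine Finset.sum_congr rfl fun k _ => ?_
    simp only [BmulVec_inr, Bmat_inr_apply, hσΘ, σ.injective.eq_iff]

lemma cvec_invariant (hWone : ∀ k l : Fin K, k < l → W k l = 1)
    (hinv : ∀ a, σ (σ a) = a) (hσΘ : ∀ a, Θ (σ a) = Θ a) (a : Fin K) :
    ((BmatS K W γ μ Θ)ᵀ *ᵥ signBS K W γ μ Θ) (σ a) =
      ((BmatS K W γ μ Θ)ᵀ *ᵥ signBS K W γ μ Θ) a := by
  rw [cvec_entry, cvec_entry]
  rw [Fintype.sum_sum_type, Fintype.sum_sum_type]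
  congr 1
  · rw [← Function.Bijective.sum_comp (pairMap_bijective σ hinv)
      (fun p => Bmat K W γ μ (Sum.inl p) (σ a) *
        Real.sign ((Bmat K W γ μ *ᵥ Θ) (Sum.inl p)))]
    refine Finset.sum_congr rfl fun p _ => ?_
    simp only [val_rel σ W γ μ Θ hWone hσΘ, row_rel σ W γ μ hWone]
    rw [pairSign]
    split
    · rw [one_mul, one_mul]
    · rw [neg_one_mul, neg_one_mul, Real.sign_neg]
      ring
  · rw [← Equiv.sum_comp σ (fun k => Bmat K W γ μ (Sum.inr k) (σ a) *
      Real.sign ((Bmat K W γ μ *ᵥ Θ) (Sum.inr k)))]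
    refine Finset.sum_congr rfl fun k _ => ?_
    simp only [BmulVec_inr, Bmat_inr_apply, hσΘ, σ.injective.eq_iff]

end Sym

/-- with all weights equal to 1 and `γ, μ > 0`, for every row `r = π(k,l)` of
`B` with `Θ⋆_k = Θ⋆_l` (a row of `S_B^c` corresponding to a zero difference), we have
`B_{r:} B_{S_B:}† sign((BΘ⋆)_{S_B}) = 0`. -/
theorem IC_zero_on_equal_pairs
    (K : ℕ) (W : Fin K → Fin K → ℝ)
    (hWone : ∀ k l : Fin K, k < l → W k l = 1)
    (μ γ : ℝ) (hμ : 0 < μ) (hγ : 0 < γ)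
    (Θ : Fin K → ℝ) (hΘ : ∃ k, Θ k ≠ 0) :
    ∀ p : {p : Fin K × Fin K // p.1 < p.2}, Θ p.val.1 = Θ p.val.2 →
      (Bmat K W γ μ (Sum.inl p)) ᵥ* (moorePenrose (BmatS K W γ μ Θ)) ⬝ᵥ
        signBS K W γ μ Θ = 0 := by
  intro p0 hEq
  have hM : BmatS K W γ μ Θ = BmatS K W γ μ Θ := rfl
  set M := BmatS K W γ μ Θ with hMdef
  set Gm := Mᵀ * M with hGm
  -- Gram matrix is invertible
  have hGmInj : ∀ x : Fin K → ℝ, Gm *ᵥ x = 0 → x = 0 := by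
    intro x hx
    have h1 : (M *ᵥ x) ⬝ᵥ (M *ᵥ x) = 0 := by
      calc (M *ᵥ x) ⬝ᵥ (M *ᵥ x) = (x ᵥ* Mᵀ) ⬝ᵥ (M *ᵥ x) := by
            rw [Matrix.vecMul_transpose]
        _ = x ⬝ᵥ (Mᵀ *ᵥ (M *ᵥ x)) := (Matrix.dotProduct_mulVec _ _ _).symm
        _ = x ⬝ᵥ (Gm *ᵥ x) := by rw [Matrix.mulVec_mulVec, ← hGm]
        _ = 0 := by rw [hx, dotProduct_zero]
    have hMx : M *ᵥ x = 0 := dotProduct_self_eq_zero.mp h1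
    exact BmatS_mulVec_injective K W γ μ Θ hWone hμ hγ hΘ x hMx
  have hGminj' : Function.Injective (Gm.mulVec) := by
    intro x y hxy
    have h0 : Gm *ᵥ (x - y) = 0 := by
      rw [Matrix.mulVec_sub, hxy, sub_self]
    exact sub_eq_zero.mp (hGmInj _ h0)
  have hGmUnit : IsUnit Gm := Matrix.mulVec_injective_iff_isUnit.mp hGminj'
  have hGmDet : IsUnit Gm.det := (Matrix.isUnit_iff_isUnit_det Gm).mp hGmUnit
  have hGmSymm : Gmᵀ = Gm := by
    rw [hGm, Matrix.transpose_mul, Matrix.transpose_transpose]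
  -- identify the pseudoinverse
  set Y := Gm⁻¹ * Mᵀ with hY
  have hYM : Y * M = 1 := by
    rw [hY, Matrix.mul_assoc, ← hGm, Matrix.nonsing_inv_mul Gm hGmDet]
  have c1 : M * Y * M = M := by rw [Matrix.mul_assoc, hYM, Matrix.mul_one]
  have c2 : Y * M * Y = Y := by rw [hYM, Matrix.one_mul]
  have c4 : (Y * M)ᵀ = Y * M := by rw [hYM, Matrix.transpose_one]
  have c3 : (M * Y)ᵀ = M * Y := by
    simp only [hY, Matrix.transpose_mul, Matrix.transpose_transpose,
      Matrix.transpose_nonsing_inv, hGmSymm, Matrix.mul_assoc]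
  have hex : ∃ X : Matrix (Fin K) {x // x ∈ suppB K W γ μ Θ} ℝ,
      M * X * M = M ∧ X * M * X = X ∧ (M * X)ᵀ = M * X ∧ (X * M)ᵀ = X * M :=
    ⟨Y, c1, c2, c3, c4⟩
  have hmp : moorePenrose M = Y := by
    rw [moorePenrose, dif_pos hex]
    obtain ⟨e1, e2, e3, e4⟩ := hex.choose_spec
    exact mp_unique M hex.choose Y e1 e2 e3 e4 c1 c2 c3 c4
  -- the symmetry
  set σ : Equiv.Perm (Fin K) := Equiv.swap p0.val.1 p0.val.2 with hσ
  have hinv : ∀ a, σ (σ a) = a := fun a => Equiv.swap_apply_self _ _ _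
  have hσΘ : ∀ a, Θ (σ a) = Θ a := by
    intro a
    rw [hσ, Equiv.swap_apply_def]
    split_ifs with h1 h2
    · rw [h1, hEq]
    · rw [h2, hEq]
    · rfl
  set c := Mᵀ *ᵥ signBS K W γ μ Θ with hc
  set u := Gm⁻¹ *ᵥ c with hu
  have hGu : Gm *ᵥ u = c := by
    rw [hu, Matrix.mulVec_mulVec, Matrix.mul_nonsing_inv Gm hGmDet,
      Matrix.one_mulVec]
  have hGu' : Gm *ᵥ (u ∘ σ) = c := by
    funext a
    have key : (Gm *ᵥ (u ∘ σ)) a = (Gm *ᵥ u) (σ a) := by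
      simp only [Matrix.mulVec, dotProduct, Function.comp_apply]
      rw [← Equiv.sum_comp σ (fun b => Gm a b * u (σ b))]
      refine Finset.sum_congr rfl fun b _ => ?_
      have h1 : Gm a (σ b) = Gm (σ a) b := by
        have h2 := gram_invariant σ W γ μ Θ hWone hinv hσΘ (σ a) b
        rw [hinv a] at h2
        rw [← hMdef, ← hGm] at h2
        exact h2
      rw [hinv b, h1]
    rw [key, hGu]
    have h3 := cvec_invariant σ W γ μ Θ hWone hinv hσΘ a
    rw [← hMdef, ← hc] at h3
    exact h3
  have huσ : u ∘ σ = u := hGminj' (hGu'.trans hGu.symm)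
  have hukl : u p0.val.1 = u p0.val.2 := by
    have h4 := congrFun huσ p0.val.1
    simp only [Function.comp_apply, hσ, Equiv.swap_apply_left] at h4
    exact h4.symm
  -- conclude
  rw [hmp, hY, ← Matrix.dotProduct_mulVec, ← Matrix.mulVec_mulVec, ← hc, ← hu]
  have h5 : Bmat K W γ μ (Sum.inl p0) ⬝ᵥ u = (Bmat K W γ μ *ᵥ u) (Sum.inl p0) := rfl
  rw [h5, BmulVec_inl, hukl]
  simp
end

section
/- Suppose all weights are equal to 1 (W_{kl} = 1 for all l > k) and γ, μ > 0. Fix (i,j), let Θ⋆_ij ∈ ℝ^K have at least one nonzero entry, and let S = {k : Θ⋆_{k;ij} ≠ 0}. Then for every index u ∈ {1,…,K} with Θ⋆_{u;ij} = 0, the u-th entry of (B_{S_B:}ᵀ B_{S_B:})⁻¹ B_{S_B:}ᵀ sign(B_{S_B:} Θ⋆_ij) equals (1 − μ/γ)·(Σ_{k∈S} sign(Θ⋆_{k;ij}))/|S|; in particular its absolute value is at most |1 − μ/γ|. -/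
open scoped Classical
open Matrix

/-! ### Auxiliary lemmas -/

lemma real_sign_pos_mul {c x : ℝ} (hc : 0 < c) : Real.sign (c * x) = Real.sign x := by
  rcases lt_trichotomy x 0 with h|h|h
  · rw [Real.sign_of_neg h, Real.sign_of_neg (mul_neg_of_pos_of_neg hc h)]
  · simp [h]
  · rw [Real.sign_of_pos h, Real.sign_of_pos (mul_pos hc h)]

lemma real_sign_abs_le (y : ℝ) : |Real.sign y| ≤ 1 := by
  rcases Real.sign_apply_eq y with h|h|h <;> simp [h]

lemma sum_pairs (K : ℕ) (u : Fin K) (F : Fin K → Fin K → ℝ)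
    (hF : ∀ k l, F k l = - F l k) :
    ∑ p : {p : Fin K × Fin K // p.1 < p.2},
      ((if u = p.val.1 then (1:ℝ) else 0) - (if u = p.val.2 then 1 else 0)) * F p.val.1 p.val.2
      = ∑ l, F u l := by
  have h0 : ∀ k, F k k = 0 := fun k => by have := hF k k; linarith
  rw [← Finset.sum_subtype (Finset.univ.filter fun p : Fin K × Fin K => p.1 < p.2)
    (fun p => by simp)
    (fun p => ((if u = p.1 then (1:ℝ) else 0) - (if u = p.2 then 1 else 0)) * F p.1 p.2)]
  rw [Finset.sum_filter, Fintype.sum_prod_type]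
  have key : ∀ k l : Fin K,
      (if k < l then ((if u = k then (1:ℝ) else 0) - (if u = l then 1 else 0)) * F k l else 0)
      = (if u = k then (if k < l then F k l else 0) else 0)
        - (if u = l then (if k < l then F k l else 0) else 0) := by
    intro k l
    by_cases h1 : k < l
    · have hkl : k ≠ l := ne_of_lt h1
      by_cases h2 : u = k
      · subst h2; simp [h1, hkl]
      · by_cases h3 : u = l
        · subst h3; simp [h1, h2]
        · simp [h1, h2, h3]
    · simp [h1]
  simp_rw [key, Finset.sum_sub_distrib]
  rw [Finset.sum_comm (f := fun k l => if u = l then (if k < l then F k l else 0) else 0)]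
  simp_rw [Finset.sum_ite_irrel, Finset.sum_const_zero, Fintype.sum_ite_eq]
  have : ∀ l, (if u < l then F u l else 0) - (if l < u then F l u else 0) = F u l := by
    intro l
    rcases lt_trichotomy u l with h|h|h
    · simp [h, asymm h]
    · simp [h, h0]
    · simp [h, asymm h, hF l u]
  rw [← Finset.sum_sub_distrib]
  exact Finset.sum_congr rfl fun l _ => this l

lemma Bmat_mulVec_inr (K : ℕ) (W : Fin K → Fin K → ℝ) (γ μ : ℝ) (v : Fin K → ℝ) (k : Fin K) :
    ((Bmat K W γ μ) *ᵥ v) (Sum.inr k) = v k := by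
  simp [Bmat, Matrix.mulVec, dotProduct]

lemma Bmat_mulVec_inl (K : ℕ) (W : Fin K → Fin K → ℝ) (γ μ : ℝ) (v : Fin K → ℝ)
    (p : {p : Fin K × Fin K // p.1 < p.2}) :
    ((Bmat K W γ μ) *ᵥ v) (Sum.inl p)
      = γ / μ * (W p.val.1 p.val.2 * (v p.val.1 - v p.val.2)) := by
  have hne : p.val.1 ≠ p.val.2 := ne_of_lt p.2
  have : ∀ c : Fin K, (Bmat K W γ μ) (Sum.inl p) c * v c
      = γ / μ * W p.val.1 p.val.2 *
        ((if c = p.val.1 then v c else 0) - (if c = p.val.2 then v c else 0)) := by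
    intro c
    by_cases h1 : c = p.val.1
    · subst h1; simp [Bmat, hne]
    · by_cases h2 : c = p.val.2
      · subst h2; simp [Bmat, h1]
      · simp [Bmat, h1, h2]
  rw [Matrix.mulVec, dotProduct]
  simp_rw [this]
  rw [← Finset.mul_sum, Finset.sum_sub_distrib]
  simp [mul_sub, mul_assoc]

lemma BmatS_transpose_mulVec (K : ℕ) (W : Fin K → Fin K → ℝ) (γ μ : ℝ) (Θ : Fin K → ℝ)
    (z : ({p : Fin K × Fin K // p.1 < p.2} ⊕ Fin K) → ℝ) (u : Fin K) :
    ((BmatS K W γ μ Θ)ᵀ *ᵥ (fun r => z r.val)) u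
      = ∑ r : ({p : Fin K × Fin K // p.1 < p.2} ⊕ Fin K),
          if ((Bmat K W γ μ) *ᵥ Θ) r ≠ 0 then (Bmat K W γ μ) r u * z r else 0 := by
  rw [Matrix.mulVec, dotProduct]
  have : ∀ r : {x // x ∈ suppB K W γ μ Θ},
      (BmatS K W γ μ Θ)ᵀ u r * z r.val = (Bmat K W γ μ) r.val u * z r.val := fun r => rfl
  simp_rw [this]
  rw [← Finset.sum_subtype (suppB K W γ μ Θ) (fun x => Iff.rfl)
    (fun r => (Bmat K W γ μ) r u * z r)]
  rw [suppB, Finset.sum_filter]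

lemma BmatS_mulVec (K : ℕ) (W : Fin K → Fin K → ℝ) (γ μ : ℝ) (Θ : Fin K → ℝ)
    (v : Fin K → ℝ) (r : {x // x ∈ suppB K W γ μ Θ}) :
    ((BmatS K W γ μ Θ) *ᵥ v) r = ((Bmat K W γ μ) *ᵥ v) r.val := rfl

/-- with all weights equal to 1 and `γ, μ > 0`, for every `u` with
`Θ⋆_u = 0`, the `u`-th entry of `(B_{S_B:}ᵀB_{S_B:})⁻¹B_{S_B:}ᵀ sign(B_{S_B:}Θ⋆)` equals
`(1 − μ/γ)·(Σ_{k∈S} sign Θ⋆_k)/|S|`, where `S = supp Θ⋆`; in particular its absolute value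
is at most `|1 − μ/γ|`. -/
theorem gram_inverse_entry_formula
    (K : ℕ) (W : Fin K → Fin K → ℝ)
    (hWone : ∀ k l : Fin K, k < l → W k l = 1)
    (μ γ : ℝ) (hμ : 0 < μ) (hγ : 0 < γ)
    (Θ : Fin K → ℝ) (hΘ : ∃ k, Θ k ≠ 0) :
    ∀ u : Fin K, Θ u = 0 →
      ((((BmatS K W γ μ Θ)ᵀ * BmatS K W γ μ Θ)⁻¹ *ᵥ
          ((BmatS K W γ μ Θ)ᵀ *ᵥ signBS K W γ μ Θ)) u =
        (1 - μ / γ) * (∑ k ∈ Finset.univ.filter (fun k => Θ k ≠ 0), Real.sign (Θ k)) /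
          ((Finset.univ.filter (fun k => Θ k ≠ 0)).card : ℝ)) ∧
      |(((BmatS K W γ μ Θ)ᵀ * BmatS K W γ μ Θ)⁻¹ *ᵥ
          ((BmatS K W γ μ Θ)ᵀ *ᵥ signBS K W γ μ Θ)) u| ≤ |1 - μ / γ| := by
  intro u hu
  obtain ⟨k₀, hk₀⟩ := hΘ
  set c := γ / μ with hcdef
  have hc : 0 < c := div_pos hγ hμ
  have hc0 : c ≠ 0 := ne_of_gt hc
  have W1 : ∀ p : {p : Fin K × Fin K // p.1 < p.2}, W p.val.1 p.val.2 = 1 :=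
    fun p => hWone _ _ p.2
  set S := (Finset.univ.filter fun k => Θ k ≠ 0) with hSdef
  have hScard : 0 < S.card := Finset.card_pos.2 ⟨k₀, by simp [hSdef, hk₀]⟩
  set s : ℝ := (S.card : ℝ) with hsdef
  have hs : 0 < s := by rw [hsdef]; exact_mod_cast hScard
  have hs0 : s ≠ 0 := ne_of_gt hs
  set t := ∑ k, Real.sign (Θ k) with htdef
  have ht_filter : ∑ k ∈ S, Real.sign (Θ k) = t := by
    rw [htdef, hSdef]
    apply Finset.sum_filter_of_ne
    intro k _ h hk0
    exact h (by rw [hk0, Real.sign_zero])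
  set r : Fin K → ℝ := fun k => ∑ l, Real.sign (Θ k - Θ l) with hrdef
  set X₀ := t * (c * (K:ℝ) - ((K:ℝ) - s)) / (c * s) with hX0def
  set x : Fin K → ℝ := fun k => if Θ k = 0 then (1 - 1/c) * t / s
    else (c * r k + Real.sign (Θ k) + c^2 * X₀) / (c^2 * (K:ℝ) + 1) with hxdef
  have hdenom : c^2 * (K:ℝ) + 1 ≠ 0 := by positivity
  -- facts about r
  have hsign_anti : ∀ a b : ℝ, Real.sign (a - b) = - Real.sign (b - a) := by
    intro a b; rw [← Real.sign_neg, neg_sub]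
  have hr_zero : ∀ l, Θ l = 0 → r l = -t := by
    intro l0 hl
    have hr0 : r l0 = ∑ l, Real.sign (Θ l0 - Θ l) := rfl
    rw [hr0, htdef, ← Finset.sum_neg_distrib]
    apply Finset.sum_congr rfl
    intro k _
    rw [hl, zero_sub, Real.sign_neg]
  have hr_sum : ∑ k, r k = 0 := by
    have h2 : ∀ k l : Fin K, Real.sign (Θ k - Θ l) = - Real.sign (Θ l - Θ k) :=
      fun k l => hsign_anti _ _
    have hself : (∑ k, r k) = - ∑ k, r k := by
      calc ∑ k, r k = ∑ k, ∑ l, Real.sign (Θ k - Θ l) := rfl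
        _ = ∑ l, ∑ k, Real.sign (Θ k - Θ l) := Finset.sum_comm
        _ = ∑ l, ∑ k, - Real.sign (Θ l - Θ k) :=
            Finset.sum_congr rfl (fun l _ => Finset.sum_congr rfl (fun k _ => h2 k l))
        _ = - ∑ l, ∑ k, Real.sign (Θ l - Θ k) := by
            simp [Finset.sum_neg_distrib]
        _ = - ∑ k, r k := rfl
    linarith
  have hzerocard : ((Finset.univ.filter fun k => Θ k = 0).card : ℝ) = (K:ℝ) - s := by
    have h := Finset.card_filter_add_card_filter_not
      (s := (Finset.univ : Finset (Fin K))) (p := fun k => Θ k = 0)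
    have h2 : ((Finset.univ.filter fun k => Θ k = 0).card : ℝ)
        + ((Finset.univ.filter fun k => ¬ Θ k = 0).card : ℝ) = (K:ℝ) := by
      exact_mod_cast congrArg (Nat.cast (R := ℝ)) (by simpa using h)
    have h3 : (Finset.univ.filter fun k => ¬ Θ k = 0) = S := by rw [hSdef]
    rw [h3] at h2
    rw [← hsdef] at h2
    linarith
  have hsum_r_zeroset : ∑ k ∈ Finset.univ.filter (fun k => Θ k = 0), r k
      = ((K:ℝ) - s) * (-t) := by
    rw [Finset.sum_congr rfl (fun k hk => hr_zero k (Finset.mem_filter.1 hk).2)]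
    rw [Finset.sum_const, nsmul_eq_mul, hzerocard]
  have hsum_r_S : ∑ k ∈ S, r k = ((K:ℝ) - s) * t := by
    have h := Finset.sum_filter_add_sum_filter_not
      (Finset.univ : Finset (Fin K)) (fun k => Θ k = 0) r
    have h3 : (Finset.univ.filter fun k => ¬ Θ k = 0) = S := by rw [hSdef]
    rw [h3, hr_sum, hsum_r_zeroset] at h
    linarith
  have hsum_sign_S : ∑ k ∈ S, Real.sign (Θ k) = t := ht_filter
  -- sum of x
  have hX : ∑ l, x l = X₀ := by
    have h := Finset.sum_filter_add_sum_filter_not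
      (Finset.univ : Finset (Fin K)) (fun k => Θ k = 0) x
    have h3 : (Finset.univ.filter fun k => ¬ Θ k = 0) = S := by rw [hSdef]
    rw [h3] at h
    have h1 : ∑ k ∈ Finset.univ.filter (fun k => Θ k = 0), x k
        = ((K:ℝ) - s) * ((1 - 1/c) * t / s) := by
      calc ∑ k ∈ Finset.univ.filter (fun k => Θ k = 0), x k
          = ∑ _k ∈ Finset.univ.filter (fun k => Θ k = 0), ((1 - 1/c) * t / s) :=
            Finset.sum_congr rfl (fun k hk => by
              simp only [hxdef]; exact if_pos (Finset.mem_filter.1 hk).2)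
        _ = ((K:ℝ) - s) * ((1 - 1/c) * t / s) := by
            rw [Finset.sum_const, nsmul_eq_mul, hzerocard]
    have h2 : ∑ k ∈ S, x k
        = (c * (((K:ℝ) - s) * t) + t + s * (c^2 * X₀)) / (c^2 * (K:ℝ) + 1) := by
      calc ∑ k ∈ S, x k
          = ∑ k ∈ S, (c * r k + Real.sign (Θ k) + c^2 * X₀) / (c^2 * (K:ℝ) + 1) :=
            Finset.sum_congr rfl (fun k hk => by
              simp only [hxdef]
              exact if_neg (by
                have := Finset.mem_filter.1 hk
                simpa [hSdef] using this.2))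
        _ = (c * (((K:ℝ) - s) * t) + t + s * (c^2 * X₀)) / (c^2 * (K:ℝ) + 1) := by
            rw [← Finset.sum_div]
            congr 1
            rw [Finset.sum_add_distrib, Finset.sum_add_distrib, ← Finset.mul_sum, hsum_r_S,
              hsum_sign_S, Finset.sum_const, nsmul_eq_mul, ← hsdef]
    rw [h1, h2] at h
    rw [← h, hX0def]
    field_simp
    ring
  -- x is constant on level sets of Θ
  have hx_class : ∀ a b, Θ a = Θ b → x a = x b := by
    intro a b h
    have hr' : r a = r b := by simp only [hrdef]; rw [h]
    simp only [hxdef]; rw [h, hr']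
  -- the component identity
  have hcomp : ∀ i : Fin K,
      (∑ l, (if Θ i ≠ Θ l then c^2 * (x i - x l) else 0)) + (if Θ i ≠ 0 then x i else 0)
        = c * r i + Real.sign (Θ i) := by
    intro i
    have hL : ∑ l, (if Θ i ≠ Θ l then c^2 * (x i - x l) else 0)
        = c^2 * ((K:ℝ) * x i - X₀) := by
      have : ∀ l, (if Θ i ≠ Θ l then c^2 * (x i - x l) else 0) = c^2 * (x i - x l) := by
        intro l
        by_cases h : Θ i = Θ l
        · simp [h, hx_class i l h]
        · simp [h]
      simp_rw [this]
      rw [← Finset.mul_sum, Finset.sum_sub_distrib, Finset.sum_const, hX, nsmul_eq_mul]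
      simp [Finset.card_univ]
    rw [hL]
    by_cases hi : Θ i = 0
    · rw [hr_zero i hi, hi, Real.sign_zero, if_neg (by simp)]
      have hxi : x i = (1 - 1/c) * t / s := by rw [hxdef]; exact if_pos hi
      rw [hxi, hX0def]
      field_simp
      ring
    · rw [if_pos hi]
      have hxi : x i = (c * r i + Real.sign (Θ i) + c^2 * X₀) / (c^2 * (K:ℝ) + 1) := by
        rw [hxdef]; exact if_neg hi
      rw [hxi]
      field_simp
      ring
  -- entries of Bmat at column i
  have hBentry_inl : ∀ (p : {p : Fin K × Fin K // p.1 < p.2}) (i : Fin K),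
      Bmat K W γ μ (Sum.inl p) i
        = c * ((if i = p.val.1 then (1:ℝ) else 0) - (if i = p.val.2 then 1 else 0)) := by
    intro p i
    have hne : p.val.1 ≠ p.val.2 := ne_of_lt p.2
    show γ / μ * (W p.val.1 p.val.2 * _) = _
    rw [W1 p, one_mul, ← hcdef]
    by_cases h1 : i = p.val.1
    · subst h1; simp [hne]
    · by_cases h2 : i = p.val.2
      · subst h2; simp [h1]
      · simp [h1, h2]
  have hBentry_inr : ∀ (k i : Fin K),
      Bmat K W γ μ (Sum.inr k) i = if i = k then (1:ℝ) else 0 := fun k i => rfl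
  have hBv_inl : ∀ (v : Fin K → ℝ) (p : {p : Fin K × Fin K // p.1 < p.2}),
      ((Bmat K W γ μ) *ᵥ v) (Sum.inl p) = c * (v p.val.1 - v p.val.2) := by
    intro v p
    rw [Bmat_mulVec_inl, W1 p, one_mul, ← hcdef]
  -- main matrix identity
  have hMx : ((BmatS K W γ μ Θ)ᵀ * BmatS K W γ μ Θ) *ᵥ x
      = (BmatS K W γ μ Θ)ᵀ *ᵥ signBS K W γ μ Θ := by
    funext i
    rw [← Matrix.mulVec_mulVec]
    have hlhs : ((BmatS K W γ μ Θ) *ᵥ x)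
        = fun r : {x // x ∈ suppB K W γ μ Θ} => ((Bmat K W γ μ) *ᵥ x) r.val := by
      funext rr; exact BmatS_mulVec K W γ μ Θ x rr
    have hrhs : signBS K W γ μ Θ
        = fun r : {x // x ∈ suppB K W γ μ Θ} =>
            (fun q => Real.sign (((Bmat K W γ μ) *ᵥ Θ) q)) r.val := rfl
    rw [hlhs, hrhs,
      BmatS_transpose_mulVec K W γ μ Θ ((Bmat K W γ μ) *ᵥ x) i,
      BmatS_transpose_mulVec K W γ μ Θ (fun q => Real.sign (((Bmat K W γ μ) *ᵥ Θ) q)) i]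
    rw [Fintype.sum_sum_type, Fintype.sum_sum_type]
    -- the four pieces
    have hFanti : ∀ k l : Fin K, (if Θ k ≠ Θ l then c^2 * (x k - x l) else 0)
        = - (if Θ l ≠ Θ k then c^2 * (x l - x k) else 0) := by
      intro k l
      by_cases h : Θ k = Θ l
      · rw [if_neg (not_not_intro h), if_neg (not_not_intro h.symm), neg_zero]
      · rw [if_pos h, if_pos (Ne.symm h)]; ring
    have hF'anti : ∀ k l : Fin K, c * Real.sign (Θ k - Θ l)
        = - (c * Real.sign (Θ l - Θ k)) := by
      intro k l; rw [hsign_anti (Θ k) (Θ l)]; ring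
    have hLinl : ∑ p : {p : Fin K × Fin K // p.1 < p.2},
        (if ((Bmat K W γ μ) *ᵥ Θ) (Sum.inl p) ≠ 0
          then Bmat K W γ μ (Sum.inl p) i * ((Bmat K W γ μ) *ᵥ x) (Sum.inl p) else 0)
        = ∑ l, (if Θ i ≠ Θ l then c^2 * (x i - x l) else 0) := by
      rw [← sum_pairs K i (fun k l => if Θ k ≠ Θ l then c^2 * (x k - x l) else 0) hFanti]
      apply Finset.sum_congr rfl
      intro p _
      rw [hBv_inl Θ p, hBv_inl x p, hBentry_inl p i]
      by_cases h : Θ p.val.1 = Θ p.val.2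
      · have h0 : c * (Θ p.val.1 - Θ p.val.2) = 0 := by rw [h]; ring
        rw [if_neg (not_not_intro h0), if_neg (not_not_intro h), mul_zero]
      · rw [if_pos (mul_ne_zero hc0 (sub_ne_zero.2 h)), if_pos h]; ring
    have hRinl : ∑ p : {p : Fin K × Fin K // p.1 < p.2},
        (if ((Bmat K W γ μ) *ᵥ Θ) (Sum.inl p) ≠ 0
          then Bmat K W γ μ (Sum.inl p) i * Real.sign (((Bmat K W γ μ) *ᵥ Θ) (Sum.inl p))
          else 0)
        = c * r i := by
      rw [hrdef, Finset.mul_sum]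
      rw [← sum_pairs K i (fun k l => c * Real.sign (Θ k - Θ l)) hF'anti]
      apply Finset.sum_congr rfl
      intro p _
      rw [hBv_inl Θ p, hBentry_inl p i]
      by_cases h : Θ p.val.1 = Θ p.val.2
      · have h0 : c * (Θ p.val.1 - Θ p.val.2) = 0 := by rw [h]; ring
        rw [if_neg (not_not_intro h0), h, sub_self, Real.sign_zero, mul_zero, mul_zero]
      · rw [if_pos (mul_ne_zero hc0 (sub_ne_zero.2 h)), real_sign_pos_mul hc]; ring
    have hLinr : ∑ k, (if ((Bmat K W γ μ) *ᵥ Θ) (Sum.inr k) ≠ 0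
          then Bmat K W γ μ (Sum.inr k) i * ((Bmat K W γ μ) *ᵥ x) (Sum.inr k) else 0)
        = (if Θ i ≠ 0 then x i else 0) := by
      have : ∀ k, (if ((Bmat K W γ μ) *ᵥ Θ) (Sum.inr k) ≠ 0
          then Bmat K W γ μ (Sum.inr k) i * ((Bmat K W γ μ) *ᵥ x) (Sum.inr k) else 0)
          = (if i = k then (if Θ k ≠ 0 then x k else 0) else 0) := by
        intro k
        rw [Bmat_mulVec_inr, Bmat_mulVec_inr, hBentry_inr]
        by_cases h1 : Θ k ≠ 0 <;> by_cases h2 : i = k <;> simp [h1, h2]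
      simp_rw [this, Fintype.sum_ite_eq]
    have hRinr : ∑ k, (if ((Bmat K W γ μ) *ᵥ Θ) (Sum.inr k) ≠ 0
          then Bmat K W γ μ (Sum.inr k) i * Real.sign (((Bmat K W γ μ) *ᵥ Θ) (Sum.inr k))
          else 0)
        = Real.sign (Θ i) := by
      have : ∀ k, (if ((Bmat K W γ μ) *ᵥ Θ) (Sum.inr k) ≠ 0
          then Bmat K W γ μ (Sum.inr k) i * Real.sign (((Bmat K W γ μ) *ᵥ Θ) (Sum.inr k))
          else 0)
          = (if i = k then Real.sign (Θ k) else 0) := by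
        intro k
        rw [Bmat_mulVec_inr, hBentry_inr]
        by_cases h1 : Θ k ≠ 0
        · by_cases h2 : i = k <;> simp [h1, h2]
        · push_neg at h1
          by_cases h2 : i = k <;> simp [h1, h2, Real.sign_zero]
      simp_rw [this, Fintype.sum_ite_eq]
    rw [hLinl, hRinl, hLinr, hRinr]
    exact hcomp i
  -- injectivity / invertibility
  have hBinj : ∀ v : Fin K → ℝ, (BmatS K W γ μ Θ) *ᵥ v = 0 → v = 0 := by
    intro v hv
    have hvk : ∀ k, Θ k ≠ 0 → v k = 0 := by
      intro k hk
      have hmem : Sum.inr k ∈ suppB K W γ μ Θ := by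
        simp only [suppB, Finset.mem_filter, Finset.mem_univ, true_and]
        rw [Bmat_mulVec_inr]; exact hk
      have h2 := congrFun hv ⟨Sum.inr k, hmem⟩
      rw [BmatS_mulVec, Bmat_mulVec_inr] at h2
      exact h2
    have hpair : ∀ (p : {p : Fin K × Fin K // p.1 < p.2}), Θ p.val.1 ≠ Θ p.val.2 →
        v p.val.1 = v p.val.2 := by
      intro p hne
      have hmem : Sum.inl p ∈ suppB K W γ μ Θ := by
        simp only [suppB, Finset.mem_filter, Finset.mem_univ, true_and]
        rw [hBv_inl Θ p]
        exact mul_ne_zero hc0 (sub_ne_zero.2 hne)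
      have h2 := congrFun hv ⟨Sum.inl p, hmem⟩
      rw [BmatS_mulVec, hBv_inl v p] at h2
      have := (mul_eq_zero.1 h2).resolve_left hc0
      linarith [sub_eq_zero.1 this]
    funext a
    show v a = 0
    by_cases ha : Θ a = 0
    · have hak : a ≠ k₀ := fun h => hk₀ (h ▸ ha)
      rcases lt_or_gt_of_ne hak with h|h
      · have := hpair ⟨(a, k₀), h⟩ (by simpa [ha] using (Ne.symm hk₀))
        rw [this]
        exact hvk k₀ hk₀
      · have := hpair ⟨(k₀, a), h⟩ (by simpa [ha] using hk₀)
        rw [← this]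
        exact hvk k₀ hk₀
    · exact hvk a (by simpa using ha)
  have hMinj : Function.Injective ((BmatS K W γ μ Θ)ᵀ * BmatS K W γ μ Θ).mulVec := by
    intro a b hab
    have h0 : ((BmatS K W γ μ Θ)ᵀ * BmatS K W γ μ Θ) *ᵥ (a - b) = 0 := by
      rw [Matrix.mulVec_sub, hab, sub_self]
    have hdp : (BmatS K W γ μ Θ *ᵥ (a - b)) ⬝ᵥ (BmatS K W γ μ Θ *ᵥ (a - b)) = 0 := by
      have h1 : (a - b) ⬝ᵥ (((BmatS K W γ μ Θ)ᵀ * BmatS K W γ μ Θ) *ᵥ (a - b)) = 0 := by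
        rw [h0, dotProduct_zero]
      rwa [← Matrix.mulVec_mulVec, Matrix.dotProduct_mulVec, Matrix.vecMul_transpose] at h1
    have hz := dotProduct_self_eq_zero.1 hdp
    have := hBinj _ hz
    exact sub_eq_zero.1 this
  have hUnit : IsUnit ((BmatS K W γ μ Θ)ᵀ * BmatS K W γ μ Θ) :=
    Matrix.mulVec_injective_iff_isUnit.1 hMinj
  have hdet : IsUnit ((BmatS K W γ μ Θ)ᵀ * BmatS K W γ μ Θ).det :=
    (Matrix.isUnit_iff_isUnit_det _).1 hUnit
  have hxval : (((BmatS K W γ μ Θ)ᵀ * BmatS K W γ μ Θ)⁻¹ *ᵥ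
      ((BmatS K W γ μ Θ)ᵀ *ᵥ signBS K W γ μ Θ)) = x := by
    rw [← hMx, Matrix.mulVec_mulVec, Matrix.nonsing_inv_mul _ hdet, Matrix.one_mulVec]
  have hxu : x u = (1 - μ / γ) * t / s := by
    have h1 : x u = (1 - 1/c) * t / s := by rw [hxdef]; exact if_pos hu
    rw [h1, hcdef, one_div_div]
  have htle : |t| ≤ s := by
    rw [← ht_filter]
    calc |∑ k ∈ S, Real.sign (Θ k)| ≤ ∑ k ∈ S, |Real.sign (Θ k)| :=
          Finset.abs_sum_le_sum_abs _ _
      _ ≤ S.card • (1:ℝ) := Finset.sum_le_card_nsmul _ _ _ (fun k _ => real_sign_abs_le _)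
      _ = s := by rw [nsmul_eq_mul, mul_one]
  constructor
  · rw [hxval, hxu, ht_filter]
  · rw [hxval, hxu]
    have habs : |(1 - μ / γ) * t / s| = |1 - μ / γ| * |t| / s := by
      rw [abs_div, abs_mul, abs_of_pos hs]
    rw [habs]
    calc |1 - μ / γ| * |t| / s ≤ |1 - μ / γ| * s / s := by
          exact div_le_div_of_nonneg_right (mul_le_mul_of_nonneg_left htle (abs_nonneg _)) hs.le
      _ = |1 - μ / γ| := by field_simp
end
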